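/- arXiv:0712.1269 — 2 statements merged into one kernel-verified Lean document; each statement's English description precedes it below -/
import Mathlib

section
/- Suppose the inequality a·x ≥ α is valid for the graphical traveling salesman polyhedron P and the face F = {x ∈ P : a·x = α} it defines is nonempty and good. Then a is tight triangular (TT) if and only if F is not contained in any degree facet, i.e., if and only if for every u ∈ V there exists x ∈ F with δ_u·x > 1. -/
open scoped BigOperators

abbrev Edge (n : ℕ) := {e : Sym2 (Fin n) // ¬ e.IsDiag}

namespace TSP
variable {n : ℕ}
noncomputable section

def dot (a x : Edge n → ℝ) : ℝ := ∑ e, a e * x e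
def ev (a : Edge n → ℝ) (u v : Fin n) : ℝ :=
  if h : u = v then 0 else a ⟨s(u, v), fun hd => h (Sym2.mk_isDiag_iff.mp hd)⟩
def indic (u v : Fin n) : Edge n → ℝ := fun e => if e.val = s(u, v) then 1 else 0
def delta (u : Fin n) : Edge n → ℝ := fun e => if u ∈ e.val then 1/2 else 0
def RootedTri (u v w : Fin n) : Prop := v ≠ w ∧ u ≠ v ∧ u ≠ w
def tri (a : Edge n → ℝ) (u v w : Fin n) : ℝ := ev a v u + ev a u w - ev a v w
def IsMetric (a : Edge n → ℝ) : Prop := ∀ u v w, RootedTri u v w → 0 ≤ tri a u v w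
def IsTT (a : Edge n → ℝ) : Prop :=
  IsMetric a ∧ ∀ u, ∃ v w, RootedTri u v w ∧ tri a u v w = 0
def lam (a : Edge n → ℝ) (u : Fin n) : ℝ :=
  sInf {r | ∃ v w, RootedTri u v w ∧ r = tri a u v w}
def theta (a : Edge n → ℝ) : Edge n → ℝ := fun e => a e - ∑ u, lam a u * delta u e
def zvec (n : ℕ) : Edge n → ℝ := fun _ => 2 / ((n : ℝ) - 1)
def gamma (a : Edge n → ℝ) : ℝ := -1 + dot a (zvec n) - ∑ u, lam a u
def nextF (i : Fin n) : Fin n := ⟨(i.val + 1) % n, Nat.mod_lt _ i.pos⟩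
def hamVec (σ : Equiv.Perm (Fin n)) : Edge n → ℝ :=
  fun e => if ∃ i : Fin n, e.val = s(σ i, σ (nextF i)) then 1 else 0
def stsp (n : ℕ) : Set (Edge n → ℝ) :=
  convexHull ℝ {x | ∃ σ : Equiv.Perm (Fin n), x = hamVec σ}
def degree (x : Edge n → ℝ) (u : Fin n) : ℝ := ∑ e, if u ∈ e.val then x e else 0
lemma ev_symm (a : Edge n → ℝ) (u v : Fin n) : ev a u v = ev a v u := by
  unfold ev
  rcases eq_or_ne u v with h | h
  · subst h; simp
  · rw [dif_neg h, dif_neg (Ne.symm h)]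
    congr 1
    exact Subtype.ext (Sym2.eq_swap)
def supportGraph (x : Edge n → ℝ) : SimpleGraph (Fin n) where
  Adj u v := u ≠ v ∧ 0 < ev x u v
  symm := ⟨fun u v h => ⟨h.1.symm, by rw [ev_symm]; exact h.2⟩⟩
  loopless := ⟨fun u h => h.1 rfl⟩
def IsEulerian (x : Edge n → ℝ) : Prop :=
  (∀ e, ∃ m : ℕ, x e = m) ∧ (supportGraph x).Connected ∧
    ∀ u, ∃ m : ℕ, 0 < m ∧ degree x u = 2 * m
def gtsp (n : ℕ) : Set (Edge n → ℝ) := convexHull ℝ {x | IsEulerian x}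
def IsFaceOf (Q F : Set (Edge n → ℝ)) : Prop :=
  ∃ a α, (∀ x ∈ Q, α ≤ dot a x) ∧ F = {x ∈ Q | dot a x = α}
def IsGood (F : Set (Edge n → ℝ)) : Prop := ∀ e : Edge n, ∃ x ∈ F, 0 < x e
def adim (X : Set (Edge n → ℝ)) : ℕ := Module.finrank ℝ (affineSpan ℝ X).direction
def direc (F : Set (Edge n → ℝ)) : Submodule ℝ (Edge n → ℝ) :=
  Submodule.span ℝ {d | ∃ x ∈ F, ∃ y ∈ F, d = y - x}
def shortcut (u v w : Fin n) : Edge n → ℝ :=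
  fun e => indic v w e - indic v u e - indic u w e
def gtspPolar (n : ℕ) : Set (Edge n → ℝ) := {b | ∀ x ∈ gtsp n, 1 ≤ dot b x}

/-- The face of `S` defined by `a ∈ D_S`. -/
def faceS (a : Edge n → ℝ) : Set (Edge n → ℝ) :=
  {x ∈ stsp n | dot a x = dot a (zvec n) - 1}

/-- `D_S`: the points `a ∈ L` whose inequality `a·x ≥ a·z − 1` is valid for `S`
and defines a nonempty good face of `S`. -/
def DS (n : ℕ) : Set (Edge n → ℝ) :=
  {a | (∀ u, dot (delta u) a = 0) ∧
       (∀ x ∈ stsp n, dot a (zvec n) - 1 ≤ dot a x) ∧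
       (faceS a).Nonempty ∧ IsGood (faceS a)}

/-- `D_P`: TT points of `P^△` defining nonempty good faces of `P`. -/
def DP (n : ℕ) : Set (Edge n → ℝ) :=
  {b | b ∈ gtspPolar n ∧ IsTT b ∧
       ({x ∈ gtsp n | dot b x = 1}).Nonempty ∧ IsGood {x ∈ gtsp n | dot b x = 1}}

/-- `𝔉(a)`: faces of `P` definable by rotated versions of `a·x ≥ a·z − 1`. -/
def Frot (a : Edge n → ℝ) : Set (Set (Edge n → ℝ)) :=
  {F | ∃ ξ : Fin n → ℝ,
    (∀ x ∈ gtsp n,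
      dot a (zvec n) - 1 + dot (∑ u, ξ u • delta u) (zvec n)
        ≤ dot (a + ∑ u, ξ u • delta u) x) ∧
    F = {x ∈ gtsp n |
      dot (a + ∑ u, ξ u • delta u) x
        = dot a (zvec n) - 1 + dot (∑ u, ξ u • delta u) (zvec n)}}

/-- `E^u(a)`: the edges achieving the minimal triangle slack rooted at `u`. -/
def Eu (a : Edge n → ℝ) (u : Fin n) : Set (Edge n) :=
  {e | ∃ v w, RootedTri u v w ∧ e.val = s(v, w) ∧ tri a u v w = lam a u}

def IsFacetP (n : ℕ) (G : Set (Edge n → ℝ)) : Prop :=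
  IsFaceOf (gtsp n) G ∧ adim G = n * (n - 1) / 2 - 1
def IsFacetS (n : ℕ) (F : Set (Edge n → ℝ)) : Prop :=
  IsFaceOf (stsp n) F ∧ adim F + 1 = adim (stsp n)
def IsNRFacet (n : ℕ) (G : Set (Edge n → ℝ)) : Prop :=
  IsFacetP n G ∧ IsFacetS n (G ∩ stsp n)
def IsDegreeFacet (n : ℕ) (G : Set (Edge n → ℝ)) : Prop :=
  ∃ u, G = {x ∈ gtsp n | dot (delta u) x = 1}
def IsNonNegFacet (n : ℕ) (G : Set (Edge n → ℝ)) : Prop :=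
  ∃ e : Edge n, G = {x ∈ gtsp n | x e = 0}
def IsNonNRFacet (n : ℕ) (G : Set (Edge n → ℝ)) : Prop :=
  IsFacetP n G ∧ IsGood G ∧ ¬ IsDegreeFacet n G ∧
    adim (G ∩ stsp n) + 1 < adim (stsp n)

/-- Solution set of the relaxation `R_B` (degree inequalities). -/
def RBge {k : ℕ} (n : ℕ) (b : Fin k → Edge n → ℝ) : Set (Edge n → ℝ) :=
  {x | (∀ j, 1 ≤ dot (b j) x) ∧ (∀ v, 1 ≤ dot (delta v) x) ∧ ∀ e, 0 ≤ x e}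

/-- Solution set of `R_B` with degree equations. -/
def RBeq {k : ℕ} (n : ℕ) (b : Fin k → Edge n → ℝ) : Set (Edge n → ℝ) :=
  {x | (∀ j, 1 ≤ dot (b j) x) ∧ (∀ v, dot (delta v) x = 1) ∧ ∀ e, 0 ≤ x e}

/-- The parsimonious property of the relaxation `R_B`. -/
def Parsimonious {k : ℕ} (n : ℕ) (b : Fin k → Edge n → ℝ) : Prop :=
  ∀ c : Edge n → ℝ, IsMetric c →
    sInf (dot c '' RBge n b) = sInf (dot c '' RBeq n b)

/-- Adjacency in the ridge graph of `P`. -/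
def RidgeAdj (n : ℕ) (F G : Set (Edge n → ℝ)) : Prop :=
  IsFacetP n F ∧ IsFacetP n G ∧ F ≠ G ∧ adim (F ∩ G) = n * (n - 1) / 2 - 2

/-- `q_I = Σ_{u ∉ I} δ_u`. -/
def qI (n : ℕ) (I : Finset (Fin n)) : Edge n → ℝ := ∑ u ∈ Iᶜ, delta u

/-- The face `G_I` of `P`. -/
def GI (n : ℕ) (a : Edge n → ℝ) (I : Finset (Fin n)) : Set (Edge n → ℝ) :=
  {x ∈ gtsp n | dot (theta a + qI n I) x = gamma a + dot (qI n I) (zvec n)}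

end

section AuxStmt2
variable {n : ℕ}

/-- The edge corresponding to an ordered pair of distinct vertices. -/
def EE {u v : Fin n} (h : u ≠ v) : Edge n :=
  ⟨s(u, v), fun hd => h (Sym2.mk_isDiag_iff.mp hd)⟩

lemma ev_eq (a : Edge n → ℝ) {u v : Fin n} (h : u ≠ v) : ev a u v = a (EE h) := dif_neg h

lemma EE_val {u v : Fin n} (h : u ≠ v) : (EE h).val = s(u, v) := rfl

lemma eq_EE {e : Edge n} {u v : Fin n} (h : u ≠ v) (he : e.val = s(u, v)) : e = EE h :=
  Subtype.ext he

lemma indic_apply (u v : Fin n) (e : Edge n) :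
    indic u v e = if e.val = s(u, v) then 1 else 0 := rfl

lemma dot_indic (a : Edge n → ℝ) {u v : Fin n} (h : u ≠ v) :
    dot a (indic u v) = ev a u v := by
  rw [ev_eq a h]
  unfold dot indic
  rw [Finset.sum_eq_single (EE h)]
  · simp [EE_val]
  · intro e _ hne
    rw [if_neg, mul_zero]
    intro hval
    exact hne (eq_EE h hval)
  · intro h'; exact absurd (Finset.mem_univ _) h'

lemma dot_add (a x z : Edge n → ℝ) : dot a (x + z) = dot a x + dot a z := by
  unfold dot; rw [← Finset.sum_add_distrib]; congr 1; ext e; simp [mul_add]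

lemma dot_sub (a x z : Edge n → ℝ) : dot a (x - z) = dot a x - dot a z := by
  unfold dot; rw [← Finset.sum_sub_distrib]; congr 1; ext e; simp [mul_sub]

lemma dot_smul (a : Edge n → ℝ) (c : ℝ) (x : Edge n → ℝ) : dot a (c • x) = c * dot a x := by
  unfold dot; rw [Finset.mul_sum]; congr 1; ext e; simp; ring

lemma degree_add (x z : Edge n → ℝ) (u : Fin n) :
    degree (x + z) u = degree x u + degree z u := by
  unfold degree; rw [← Finset.sum_add_distrib]; congr 1; ext e
  by_cases h : u ∈ e.val <;> simp [h]

lemma degree_sub (x z : Edge n → ℝ) (u : Fin n) :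
    degree (x - z) u = degree x u - degree z u := by
  unfold degree; rw [← Finset.sum_sub_distrib]; congr 1; ext e
  by_cases h : u ∈ e.val <;> simp [h]

lemma degree_smul (c : ℝ) (x : Edge n → ℝ) (u : Fin n) :
    degree (c • x) u = c * degree x u := by
  unfold degree; rw [Finset.mul_sum]; congr 1; ext e
  by_cases h : u ∈ e.val <;> simp [h]

lemma degree_indic {u v : Fin n} (h : u ≠ v) (p : Fin n) :
    degree (indic u v) p = if p ∈ s(u, v) then 1 else 0 := by
  unfold degree
  rw [Finset.sum_eq_single (EE h)]
  · simp [indic_apply, EE_val]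
  · intro e _ hne
    rw [indic_apply, if_neg (fun hval => hne (eq_EE h hval)), ite_self]
  · intro h'; exact absurd (Finset.mem_univ _) h'


lemma natval_nonneg {y : Edge n → ℝ} (h : ∀ e, ∃ m : ℕ, y e = m) (e : Edge n) : 0 ≤ y e := by
  obtain ⟨m, hm⟩ := h e; rw [hm]; positivity

lemma natval_one_le {y : Edge n → ℝ} (h : ∀ e, ∃ m : ℕ, y e = m) {e : Edge n}
    (hp : 0 < y e) : 1 ≤ y e := by
  obtain ⟨m, hm⟩ := h e
  rw [hm] at hp ⊢
  exact_mod_cast Nat.one_le_iff_ne_zero.mpr (by exact_mod_cast hp.ne')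

lemma ev_nonneg {y : Edge n → ℝ} (h : ∀ e, ∃ m : ℕ, y e = m) (p q : Fin n) : 0 ≤ ev y p q := by
  rcases eq_or_ne p q with rfl | hpq
  · simp [ev]
  · rw [ev_eq y hpq]; exact natval_nonneg h _

lemma dot_delta_eq (x : Edge n → ℝ) (u : Fin n) :
    dot (delta u) x = degree x u / 2 := by
  unfold dot delta degree
  rw [Finset.sum_div]
  congr 1; ext e
  by_cases h : u ∈ e.val <;> simp [h] <;> ring

lemma eulerian_mem_gtsp {y : Edge n → ℝ} (hy : IsEulerian y) : y ∈ gtsp n :=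
  subset_convexHull ℝ _ hy

lemma reach_mono {V : Type*} {G H : SimpleGraph V} (h : ∀ p q, G.Adj p q → H.Reachable p q)
    {p q : V} (hr : G.Reachable p q) : H.Reachable p q := by
  obtain ⟨wk⟩ := hr
  induction wk with
  | nil => exact SimpleGraph.Reachable.refl _
  | cons hadj _ ih => exact (h _ _ hadj).trans ih

lemma connected_mono {V : Type*} {G H : SimpleGraph V} (hG : G.Connected)
    (h : ∀ p q, G.Adj p q → H.Reachable p q) : H.Connected := by
  haveI : Nonempty V := hG.nonempty
  exact SimpleGraph.Connected.mk (fun p q => reach_mono h (hG.preconnected p q))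

lemma detour {y : Edge n → ℝ} (hy : IsEulerian y) {u v w : Fin n} (hrt : RootedTri u v w)
    (hpos : 0 < y (EE hrt.1)) :
    ∃ y', IsEulerian y' ∧ ∀ a, dot a y' = dot a y + tri a u v w := by
  obtain ⟨hvw, huv, huw⟩ := hrt
  obtain ⟨hnat, hconn, hdeg⟩ := hy
  set y' : Edge n → ℝ := y + indic u v + indic u w - indic v w with hy'def
  have hval : ∀ e : Edge n, y' e = y e + (if e.val = s(u,v) then 1 else 0)
      + (if e.val = s(u,w) then 1 else 0) - (if e.val = s(v,w) then 1 else 0) := fun e => rfl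
  -- pair distinctness
  have d12 : s(u,v) ≠ s(u,w) := by
    intro h; rcases Sym2.eq_iff.mp h with ⟨-, h2⟩ | ⟨h1, -⟩
    · exact hvw h2
    · exact huw h1
  have d13 : s(u,v) ≠ s(v,w) := by
    intro h; rcases Sym2.eq_iff.mp h with ⟨h1, -⟩ | ⟨h1, -⟩
    · exact huv h1
    · exact huw h1
  have d23 : s(u,w) ≠ s(v,w) := by
    intro h; rcases Sym2.eq_iff.mp h with ⟨h1, -⟩ | ⟨-, h2⟩
    · exact huv h1
    · exact hvw h2.symm
  -- integrality
  have hnat' : ∀ e, ∃ m : ℕ, y' e = m := by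
    intro e
    obtain ⟨m, hm⟩ := hnat e
    by_cases h1 : e.val = s(u,v)
    · have h2 : ¬ e.val = s(u,w) := by rw [h1]; exact d12
      have h3 : ¬ e.val = s(v,w) := by rw [h1]; exact d13
      exact ⟨m + 1, by rw [hval e, if_pos h1, if_neg h2, if_neg h3, hm]; push_cast; ring⟩
    · by_cases h2 : e.val = s(u,w)
      · have h3 : ¬ e.val = s(v,w) := by rw [h2]; exact d23
        exact ⟨m + 1, by rw [hval e, if_neg h1, if_pos h2, if_neg h3, hm]; push_cast; ring⟩
      · by_cases h3 : e.val = s(v,w)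
        · have he : e = EE hvw := eq_EE hvw h3
          have h1m : 1 ≤ m := by
            have := hpos; rw [← he, hm] at this
            exact_mod_cast Nat.one_le_iff_ne_zero.mpr (by exact_mod_cast this.ne')
          refine ⟨m - 1, ?_⟩
          have : ((m - 1 : ℕ) : ℝ) = (m : ℝ) - 1 := by
            push_cast [Nat.cast_sub h1m]; ring
          rw [hval e, if_neg h1, if_neg h2, if_pos h3, hm, this]; ring
        · exact ⟨m, by rw [hval e, if_neg h1, if_neg h2, if_neg h3, hm]; ring⟩
  -- degrees
  have hdegval : ∀ p, degree y' p = degree y p + (if p = u then 2 else 0) := by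
    intro p
    rw [hy'def, degree_sub, degree_add, degree_add, degree_indic huv, degree_indic huw,
      degree_indic hvw]
    by_cases hpu : p = u
    · subst hpu
      simp [Sym2.mem_iff, huv.symm, huw.symm, huv, huw]; ring
    · by_cases hpv : p = v
      · subst hpv
        simp [Sym2.mem_iff, hpu, hvw, Ne.symm hpu]
      · by_cases hpw : p = w
        · subst hpw
          simp [Sym2.mem_iff, hpu, hvw.symm, Ne.symm hpu]
        · simp [Sym2.mem_iff, hpu, hpv, hpw]
  have hdeg' : ∀ q, ∃ m : ℕ, 0 < m ∧ degree y' q = 2 * m := by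
    intro q
    obtain ⟨m, hm0, hm⟩ := hdeg q
    by_cases hq : q = u
    · exact ⟨m + 1, by omega, by rw [hdegval, hm, if_pos hq]; push_cast; ring⟩
    · exact ⟨m, hm0, by rw [hdegval, hm, if_neg hq]; ring⟩
  -- ev values
  have hev' : ∀ p q : Fin n, (h : p ≠ q) → ev y' p q = ev y p q
      + (if s(p,q) = s(u,v) then 1 else 0) + (if s(p,q) = s(u,w) then 1 else 0)
      - (if s(p,q) = s(v,w) then 1 else 0) := by
    intro p q h
    rw [ev_eq y' h, ev_eq y h, hval]
    rfl
  have hadjuv : (supportGraph y').Adj u v := by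
    refine ⟨huv, ?_⟩
    rw [hev' u v huv, if_pos rfl, if_neg d12, if_neg d13]
    have := ev_nonneg hnat u v
    linarith
  have hadjuw : (supportGraph y').Adj u w := by
    refine ⟨huw, ?_⟩
    rw [hev' u w huw, if_neg (Ne.symm d12), if_pos rfl, if_neg d23]
    have := ev_nonneg hnat u w
    linarith
  -- connectivity
  have hconn' : (supportGraph y').Connected := by
    refine connected_mono hconn ?_
    rintro p q ⟨hpq, hev⟩
    by_cases h3 : s(p,q) = s(v,w)
    · rcases Sym2.eq_iff.mp h3 with ⟨rfl, rfl⟩ | ⟨rfl, rfl⟩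
      · exact (hadjuv.symm.reachable).trans hadjuw.reachable
      · exact (hadjuw.symm.reachable).trans hadjuv.reachable
    · refine SimpleGraph.Adj.reachable ⟨hpq, ?_⟩
      rw [hev' p q hpq, if_neg h3]
      have g1 : (0:ℝ) ≤ if s(p,q) = s(u,v) then 1 else 0 := by positivity
      have g2 : (0:ℝ) ≤ if s(p,q) = s(u,w) then 1 else 0 := by positivity
      linarith
  refine ⟨y', ⟨hnat', hconn', hdeg'⟩, ?_⟩
  intro a
  rw [hy'def, dot_sub, dot_add, dot_add, dot_indic a huv, dot_indic a huw, dot_indic a hvw]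
  unfold tri
  rw [ev_symm a v u]
  ring


lemma dot_sum {ι : Type*} (a : Edge n → ℝ) (t : Finset ι) (w : ι → ℝ) (z : ι → Edge n → ℝ) :
    dot a (∑ i ∈ t, w i • z i) = ∑ i ∈ t, w i * dot a (z i) := by
  unfold dot
  simp only [Finset.sum_apply, Pi.smul_apply, smul_eq_mul, Finset.mul_sum]
  rw [Finset.sum_comm]
  exact Finset.sum_congr rfl fun i _ => Finset.sum_congr rfl fun e _ => by ring

lemma extract {S : Set (Edge n → ℝ)} {a c : Edge n → ℝ} {α β : ℝ} {x : Edge n → ℝ}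
    (hx : x ∈ convexHull ℝ S) (hval : ∀ s ∈ S, α ≤ dot a s)
    (hxa : dot a x = α) (hxc : β < dot c x) :
    ∃ s ∈ S, dot a s = α ∧ β < dot c s := by
  rw [convexHull_eq] at hx
  obtain ⟨ι, t, w, z, hw0, hw1, hz, hcm⟩ := hx
  rw [Finset.centerMass_eq_of_sum_1 _ _ hw1] at hcm
  have hxa' : ∑ i ∈ t, w i * dot a (z i) = α := by rw [← dot_sum, hcm, hxa]
  have hxc' : β < ∑ i ∈ t, w i * dot c (z i) := by rw [← dot_sum, hcm]; exact hxc
  -- all points with positive weight lie on the face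
  have hface : ∀ i ∈ t, w i * (dot a (z i) - α) = 0 := by
    have hsum : ∑ i ∈ t, w i * (dot a (z i) - α) = 0 := by
      have : ∑ i ∈ t, w i * (dot a (z i) - α)
          = (∑ i ∈ t, w i * dot a (z i)) - (∑ i ∈ t, w i) * α := by
        rw [Finset.sum_mul, ← Finset.sum_sub_distrib]
        refine Finset.sum_congr rfl fun i _ => by ring
      rw [this, hxa', hw1, one_mul, sub_self]
    intro i hi
    refine (Finset.sum_eq_zero_iff_of_nonneg ?_).mp hsum i hi
    intro j hj
    exact mul_nonneg (hw0 j hj) (sub_nonneg.mpr (hval _ (hz j hj)))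
  -- some positive-weight point has large c-value
  by_contra hcon
  push_neg at hcon
  have : ∑ i ∈ t, w i * dot c (z i) ≤ β := by
    calc ∑ i ∈ t, w i * dot c (z i) ≤ ∑ i ∈ t, w i * β := by
          refine Finset.sum_le_sum fun i hi => ?_
          rcases eq_or_lt_of_le (hw0 i hi) with h0 | h0
          · rw [← h0]; simp
          · rcases lt_or_ge β (dot c (z i)) with hb | hb
            · -- then z i ∈ S with dot a = α and β < dot c: contradiction with hcon
              have hzi : dot a (z i) = α := by
                have := hface i hi
                rcases mul_eq_zero.mp this with h | h
                · exact absurd h (ne_of_gt h0)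
                · linarith [sub_eq_zero.mp h]
              exact absurd hb (not_lt.mpr (le_of_not_gt (fun hb' =>
                (hcon (z i) (hz i hi) hzi).not_gt hb')))
            · exact mul_le_mul_of_nonneg_left hb (le_of_lt h0)
      _ = (∑ i ∈ t, w i) * β := by rw [Finset.sum_mul]
      _ = β := by rw [hw1, one_mul]
  linarith


def avoidG (x : Edge n → ℝ) (u : Fin n) : SimpleGraph (Fin n) where
  Adj p q := p ≠ u ∧ q ≠ u ∧ (supportGraph x).Adj p q
  symm := ⟨fun p q h => ⟨h.2.1, h.1, h.2.2.symm⟩⟩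
  loopless := ⟨fun p h => h.2.2.1 rfl⟩

lemma avoid_ne {x : Edge n → ℝ} {u p q : Fin n} (h : (avoidG x u).Reachable p q)
    (hp : p ≠ u) : q ≠ u := by
  obtain ⟨wk⟩ := h
  induction wk with
  | nil => exact hp
  | cons hadj _ ih => exact ih hadj.2.1

lemma first_hit_aux {y : Edge n → ℝ} {u : Fin n} {p t : Fin n}
    (wk : (supportGraph y).Walk p t) :
    t = u → p ≠ u →
      ∃ q, q ≠ u ∧ (avoidG y u).Reachable p q ∧ (supportGraph y).Adj q u := by
  induction wk with
  | nil => intro ht hp; exact absurd ht hp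
  | @cons p' r t' hadj wtail ih =>
    intro ht hp
    by_cases hru : r = u
    · exact ⟨p', hp, SimpleGraph.Reachable.refl p', by rw [← hru]; exact hadj⟩
    · obtain ⟨q, hq, hreach, hadj'⟩ := ih ht hru
      exact ⟨q, hq, (SimpleGraph.Adj.reachable
        (show (avoidG y u).Adj p' r from ⟨hp, hru, hadj⟩)).trans hreach, hadj'⟩

lemma first_hit {y : Edge n → ℝ} {u p : Fin n} (hp : p ≠ u)
    (hr : (supportGraph y).Reachable p u) :
    ∃ q, q ≠ u ∧ (avoidG y u).Reachable p q ∧ (supportGraph y).Adj q u := by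
  obtain ⟨wk⟩ := hr
  exact first_hit_aux wk rfl hp

lemma sum_pos_witness {ι : Type*} {s : Finset ι} {f : ι → ℝ} (h : 0 < ∑ e ∈ s, f e) :
    ∃ e ∈ s, 0 < f e := by
  by_contra hc
  push_neg at hc
  exact absurd (Finset.sum_nonpos hc) (not_le.mpr h)

lemma edge_other {e : Edge n} {u : Fin n} (h : u ∈ e.val) :
    ∃ q, q ≠ u ∧ e.val = s(u, q) := by
  classical
  refine ⟨Sym2.Mem.other' h, fun hq => ?_, (Sym2.other_spec' h).symm⟩
  exact e.2 (by rw [← Sym2.other_spec' h, hq]; exact Sym2.mk_isDiag_iff.mpr rfl)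

lemma parity {y : Edge n → ℝ} (hnat : ∀ e, ∃ m : ℕ, y e = m)
    (heven : ∀ q : Fin n, ∃ m : ℕ, degree y q = 2 * m)
    (u : Fin n) (C : Finset (Fin n)) (huC : u ∉ C)
    (hcl : ∀ e : Edge n, 0 < y e → ∀ p ∈ C, p ∈ e.val → ∀ q, q ∈ e.val → q = u ∨ q ∈ C) :
    ∃ N : ℕ, ∑ e ∈ Finset.univ.filter
        (fun e : Edge n => u ∈ e.val ∧ ∃ q ∈ C, q ∈ e.val), y e = 2 * N := by
  classical
  set cnt : Edge n → ℕ := fun e => (C.filter (fun q => q ∈ e.val)).card with hcnt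
  -- step A : sum of degrees over C
  have stepA : ∑ q ∈ C, degree y q = ∑ e : Edge n, (cnt e : ℝ) * y e := by
    unfold degree
    rw [Finset.sum_comm]
    refine Finset.sum_congr rfl fun e _ => ?_
    rw [← Finset.sum_filter, Finset.sum_const, hcnt]
    simp [nsmul_eq_mul]
  -- basic cnt facts
  have cnt_le_two : ∀ e : Edge n, cnt e ≤ 2 := by
    intro e
    obtain ⟨a, b, hab, he⟩ : ∃ a b : Fin n, a ≠ b ∧ e.val = s(a, b) := by
      rcases e with ⟨z, hz⟩
      induction z using Sym2.ind with
      | _ a b => exact ⟨a, b, fun h => hz (Sym2.mk_isDiag_iff.mpr h), rfl⟩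
    calc cnt e ≤ ({a, b} : Finset (Fin n)).card := by
          apply Finset.card_le_card
          intro p hp
          rw [Finset.mem_filter, he, Sym2.mem_iff] at hp
          simpa using hp.2
      _ ≤ 2 := Finset.card_insert_le _ _ |>.trans (by simp)
  have cnt_le_one : ∀ e : Edge n, u ∈ e.val → cnt e ≤ 1 := by
    intro e hu
    obtain ⟨q, hq, he⟩ := edge_other hu
    calc cnt e ≤ ({q} : Finset (Fin n)).card := by
          apply Finset.card_le_card
          intro p hp
          rw [Finset.mem_filter, he, Sym2.mem_iff] at hp
          rcases hp.2 with rfl | rfl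
          · exact absurd hp.1 huC
          · simp
      _ = 1 := Finset.card_singleton _
  have cnt_one_mem : ∀ e : Edge n, 1 ≤ cnt e → ∃ p ∈ C, p ∈ e.val := by
    intro e h1
    obtain ⟨p, hp⟩ := Finset.card_pos.mp (by omega : 0 < cnt e)
    rw [Finset.mem_filter] at hp
    exact ⟨p, hp.1, hp.2⟩
  have zero_of_one : ∀ e : Edge n, cnt e = 1 → u ∉ e.val → y e = 0 := by
    intro e h1 hu
    by_contra hne
    have hpos : 0 < y e := lt_of_le_of_ne (natval_nonneg hnat e) (Ne.symm hne)
    obtain ⟨p, hpC, hpe⟩ := cnt_one_mem e (by omega)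
    obtain ⟨a, b, hab, he⟩ : ∃ a b : Fin n, a ≠ b ∧ e.val = s(a, b) := by
      rcases e with ⟨z, hz⟩
      induction z using Sym2.ind with
      | _ a b => exact ⟨a, b, fun h => hz (Sym2.mk_isDiag_iff.mpr h), rfl⟩
    have ha : a = u ∨ a ∈ C := hcl e hpos p hpC hpe a (by rw [he]; exact Sym2.mem_mk_left a b)
    have hb : b = u ∨ b ∈ C := hcl e hpos p hpC hpe b (by rw [he]; exact Sym2.mem_mk_right a b)
    rcases ha with rfl | haC
    · exact hu (by rw [he]; exact Sym2.mem_mk_left _ _)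
    · rcases hb with rfl | hbC
      · exact hu (by rw [he]; exact Sym2.mem_mk_right _ _)
      · have : ({a, b} : Finset (Fin n)) ⊆ C.filter (fun q => q ∈ e.val) := by
          intro p' hp'
          rcases Finset.mem_insert.mp hp' with rfl | hp'
          · exact Finset.mem_filter.mpr ⟨haC, by rw [he]; exact Sym2.mem_mk_left _ _⟩
          · rw [Finset.mem_singleton] at hp'
            subst hp'
            exact Finset.mem_filter.mpr ⟨hbC, by rw [he]; exact Sym2.mem_mk_right _ _⟩
        have h2 : 2 ≤ cnt e := by
          have := Finset.card_le_card this
          rwa [Finset.card_insert_of_notMem (by simpa using hab), Finset.card_singleton] at this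
        omega
  -- step C : decomposition
  have stepC : ∑ e : Edge n, (cnt e : ℝ) * y e
      = 2 * (∑ e ∈ Finset.univ.filter (fun e : Edge n => cnt e = 2), y e)
        + ∑ e ∈ Finset.univ.filter
            (fun e : Edge n => u ∈ e.val ∧ ∃ q ∈ C, q ∈ e.val), y e := by
    rw [Finset.sum_filter, Finset.sum_filter, Finset.mul_sum, ← Finset.sum_add_distrib]
    refine Finset.sum_congr rfl fun e _ => ?_
    have h2 := cnt_le_two e
    interval_cases h : cnt e
    · -- cnt = 0 : B-pred false
      have : ¬ (u ∈ e.val ∧ ∃ q ∈ C, q ∈ e.val) := by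
        rintro ⟨-, q, hqC, hqe⟩
        have hmem : q ∈ C.filter (fun q => q ∈ e.val) := Finset.mem_filter.mpr ⟨hqC, hqe⟩
        have h1 : 0 < cnt e := by rw [hcnt]; exact Finset.card_pos.mpr ⟨q, hmem⟩
        omega
      simp [this, h]
    · -- cnt = 1
      by_cases hu : u ∈ e.val
      · have hB : u ∈ e.val ∧ ∃ q ∈ C, q ∈ e.val := by
          obtain ⟨p, hpC, hpe⟩ := cnt_one_mem e (by omega)
          exact ⟨hu, p, hpC, hpe⟩
        simp [hB, h]
      · have h0 : y e = 0 := zero_of_one e h hu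
        have : ¬ (u ∈ e.val ∧ ∃ q ∈ C, q ∈ e.val) := fun hB => hu hB.1
        simp [this, h0, h]
    · -- cnt = 2 : u ∉ e
      have hu : u ∉ e.val := fun hu => by have := cnt_le_one e hu; omega
      have : ¬ (u ∈ e.val ∧ ∃ q ∈ C, q ∈ e.val) := fun hB => hu hB.1
      simp [this, h]
      try ring
  -- step D : naturals
  choose f hf using hnat
  choose g hg using heven
  have hBnat : ∑ e ∈ Finset.univ.filter
      (fun e : Edge n => u ∈ e.val ∧ ∃ q ∈ C, q ∈ e.val), y e
      = ((∑ e ∈ Finset.univ.filter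
          (fun e : Edge n => u ∈ e.val ∧ ∃ q ∈ C, q ∈ e.val), f e : ℕ) : ℝ) := by
    rw [Nat.cast_sum]
    exact Finset.sum_congr rfl fun e _ => hf e
  have hKnat : ∑ e ∈ Finset.univ.filter (fun e : Edge n => cnt e = 2), y e
      = ((∑ e ∈ Finset.univ.filter (fun e : Edge n => cnt e = 2), f e : ℕ) : ℝ) := by
    rw [Nat.cast_sum]
    exact Finset.sum_congr rfl fun e _ => hf e
  have hMnat : ∑ q ∈ C, degree y q = ((2 * ∑ q ∈ C, g q : ℕ) : ℝ) := by
    push_cast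
    rw [Finset.mul_sum]
    exact Finset.sum_congr rfl fun q _ => hg q
  set N := ∑ e ∈ Finset.univ.filter
      (fun e : Edge n => u ∈ e.val ∧ ∃ q ∈ C, q ∈ e.val), f e with hN
  set K := ∑ e ∈ Finset.univ.filter (fun e : Edge n => cnt e = 2), f e with hK
  set M := ∑ q ∈ C, g q with hM
  have key : (N : ℝ) + 2 * K = 2 * M := by
    have := stepA
    rw [stepC, hBnat, hKnat] at this
    rw [hMnat] at this
    push_cast at this ⊢
    linarith
  have keyN : N + 2 * K = 2 * M := by exact_mod_cast key
  refine ⟨M - K, ?_⟩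
  rw [hBnat]
  have : N = 2 * (M - K) := by omega
  rw [this]
  push_cast
  ring


lemma pair_ne_left {u v w : Fin n} (huv : u ≠ v) (huw : u ≠ w) (hvw : v ≠ w) :
    s(u,v) ≠ s(u,w) := by
  intro h; rcases Sym2.eq_iff.mp h with ⟨-, h2⟩ | ⟨h1, -⟩
  · exact hvw h2
  · exact huw h1

lemma pair_ne_opp {u v w : Fin n} (huv : u ≠ v) (huw : u ≠ w) :
    s(u,v) ≠ s(v,w) := by
  intro h; rcases Sym2.eq_iff.mp h with ⟨h1, -⟩ | ⟨h1, -⟩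
  · exact huv h1
  · exact huw h1

lemma u_not_mem_vw {u v w : Fin n} (huv : u ≠ v) (huw : u ≠ w) : u ∉ s(v,w) := by
  rw [Sym2.mem_iff]
  rintro (rfl | rfl)
  · exact huv rfl
  · exact huw rfl

lemma cross_patch {y : Edge n → ℝ} (hnat : ∀ e, ∃ m : ℕ, y e = m)
    (hdegall : ∀ q, ∃ m : ℕ, 0 < m ∧ degree y q = 2 * m)
    {u v w : Fin n} (hrt : RootedTri u v w) {m : ℕ} (hm : 2 ≤ m)
    (hdegu : degree y u = 2 * m)
    (hv : 0 < ev y u v) (hw : 0 < ev y u w) :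
    ∃ y' : Edge n → ℝ,
      (∀ e : Edge n, y' e = y e - (if e.val = s(u,v) then 1 else 0)
        - (if e.val = s(u,w) then 1 else 0) + (if e.val = s(v,w) then 1 else 0)) ∧
      (∀ e, ∃ k : ℕ, y' e = k) ∧
      (∀ q, ∃ k : ℕ, 0 < k ∧ degree y' q = 2 * k) ∧
      (∀ a, dot a y' = dot a y - tri a u v w) ∧
      (∀ p q : Fin n, p ≠ q → ev y' p q = ev y p q
        - (if s(p,q) = s(u,v) then 1 else 0) - (if s(p,q) = s(u,w) then 1 else 0)
        + (if s(p,q) = s(v,w) then 1 else 0)) := by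
  classical
  obtain ⟨hvw, huv, huw⟩ := hrt
  set y' : Edge n → ℝ := y - indic u v - indic u w + indic v w with hy'def
  have hval : ∀ e : Edge n, y' e = y e - (if e.val = s(u,v) then 1 else 0)
      - (if e.val = s(u,w) then 1 else 0) + (if e.val = s(v,w) then 1 else 0) := fun e => rfl
  have d12 : s(u,v) ≠ s(u,w) := pair_ne_left huv huw hvw
  have d13 : s(u,v) ≠ s(v,w) := pair_ne_opp huv huw
  have d23 : s(u,w) ≠ s(v,w) := by
    intro h; rcases Sym2.eq_iff.mp h with ⟨h1, -⟩ | ⟨-, h2⟩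
    · exact huv h1
    · exact hvw h2.symm
  have hyuv : 1 ≤ y (EE huv) := natval_one_le hnat (by rwa [ev_eq y huv] at hv)
  have hyuw : 1 ≤ y (EE huw) := natval_one_le hnat (by rwa [ev_eq y huw] at hw)
  have hnat' : ∀ e, ∃ k : ℕ, y' e = k := by
    intro e
    obtain ⟨k, hk⟩ := hnat e
    by_cases h1 : e.val = s(u,v)
    · have h2 : ¬ e.val = s(u,w) := by rw [h1]; exact d12
      have h3 : ¬ e.val = s(v,w) := by rw [h1]; exact d13
      have hk1 : 1 ≤ k := by
        have := hyuv; rw [← eq_EE huv h1, hk] at this; exact_mod_cast this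
      refine ⟨k - 1, ?_⟩
      rw [hval e, if_pos h1, if_neg h2, if_neg h3, hk, Nat.cast_sub hk1]
      ring
    · by_cases h2 : e.val = s(u,w)
      · have h3 : ¬ e.val = s(v,w) := by rw [h2]; exact d23
        have hk1 : 1 ≤ k := by
          have := hyuw; rw [← eq_EE huw h2, hk] at this; exact_mod_cast this
        refine ⟨k - 1, ?_⟩
        rw [hval e, if_neg h1, if_pos h2, if_neg h3, hk, Nat.cast_sub hk1]
        ring
      · by_cases h3 : e.val = s(v,w)
        · exact ⟨k + 1, by rw [hval e, if_neg h1, if_neg h2, if_pos h3, hk]; push_cast; ring⟩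
        · exact ⟨k, by rw [hval e, if_neg h1, if_neg h2, if_neg h3, hk]; ring⟩
  have hdegval : ∀ p, degree y' p = degree y p - (if p = u then 2 else 0) := by
    intro p
    rw [hy'def, degree_add, degree_sub, degree_sub, degree_indic huv, degree_indic huw,
      degree_indic hvw]
    by_cases hpu : p = u
    · subst hpu
      simp [Sym2.mem_iff, huv.symm, huw.symm, huv, huw]; ring
    · by_cases hpv : p = v
      · subst hpv
        simp [Sym2.mem_iff, hpu, hvw, Ne.symm hpu]
      · by_cases hpw : p = w
        · subst hpw
          simp [Sym2.mem_iff, hpu, hvw.symm, Ne.symm hpu]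
        · simp [Sym2.mem_iff, hpu, hpv, hpw]
  have hdeg' : ∀ q, ∃ k : ℕ, 0 < k ∧ degree y' q = 2 * k := by
    intro q
    by_cases hq : q = u
    · subst hq
      refine ⟨m - 1, by omega, ?_⟩
      rw [hdegval, if_pos rfl, hdegu, Nat.cast_sub (by omega : 1 ≤ m)]
      push_cast; ring
    · obtain ⟨k, hk0, hk⟩ := hdegall q
      exact ⟨k, hk0, by rw [hdegval, if_neg hq, hk]; ring⟩
  have hdot : ∀ a, dot a y' = dot a y - tri a u v w := by
    intro a
    rw [hy'def, dot_add, dot_sub, dot_sub, dot_indic a huv, dot_indic a huw, dot_indic a hvw]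
    unfold tri
    rw [ev_symm a v u]
    ring
  have hev' : ∀ p q : Fin n, p ≠ q → ev y' p q = ev y p q
      - (if s(p,q) = s(u,v) then 1 else 0) - (if s(p,q) = s(u,w) then 1 else 0)
      + (if s(p,q) = s(v,w) then 1 else 0) := by
    intro p q h
    rw [ev_eq y' h, ev_eq y h, hval]
    rfl
  exact ⟨y', hval, hnat', hdeg', hdot, hev'⟩


lemma shortcut_step {y : Edge n → ℝ} (hy : IsEulerian y) (u : Fin n) {m : ℕ} (hm : 2 ≤ m)
    (hdegu : degree y u = 2 * m) :
    ∃ y', IsEulerian y' ∧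
      ((∃ v w, RootedTri u v w ∧ ∀ a, dot a y' = dot a y - tri a u v w) ∨
       (∃ v, u ≠ v ∧ ∀ a, dot a y' = dot a y - 2 * ev a u v)) := by
  classical
  obtain ⟨hnat, hconn, hdegall⟩ := hy
  -- find a neighbour v of u
  have hdpos : 0 < ∑ e : Edge n, (if u ∈ e.val then y e else 0) := by
    have h2m : (2:ℝ) ≤ (m:ℝ) := by exact_mod_cast hm
    have h2 : degree y u = 2 * m := hdegu
    unfold degree at h2
    rw [h2]; linarith
  obtain ⟨e0, -, he0⟩ := sum_pos_witness hdpos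
  have hu0 : u ∈ e0.val := by by_contra h; rw [if_neg h] at he0; exact lt_irrefl 0 he0
  rw [if_pos hu0] at he0
  obtain ⟨v, hvu, he0v⟩ := edge_other hu0
  have huv : u ≠ v := hvu.symm
  have hevuv : 0 < ev y u v := by rw [ev_eq y huv, ← eq_EE huv he0v]; exact he0
  by_cases hallv : ∀ q, q ≠ u → 0 < ev y u q → (avoidG y u).Reachable v q
  · -- all neighbours of u are reachable from v avoiding u
    by_cases hsec : ∃ w, w ≠ u ∧ w ≠ v ∧ 0 < ev y u w
    · -- single-class case with a second distinct neighbour w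
      obtain ⟨w, hwu, hwv, hevuw⟩ := hsec
      have huw : u ≠ w := hwu.symm
      have hrt : RootedTri u v w := ⟨hwv.symm, huv, huw⟩
      obtain ⟨y', hval, hnat', hdeg', hdot, hev'⟩ :=
        cross_patch hnat hdegall hrt hm hdegu hevuv hevuw
      have hallreach : ∀ p, p ≠ u → (avoidG y u).Reachable v p := by
        intro p hp
        obtain ⟨q0, hq0u, hARpq0, hAdjq0u⟩ := first_hit hp (hconn.preconnected p u)
        have : 0 < ev y u q0 := by rw [ev_symm]; exact hAdjq0u.2
        exact (hallv q0 hq0u this).trans hARpq0.symm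
      have hint : ∀ p q : Fin n, (avoidG y u).Adj p q → (supportGraph y').Adj p q := by
        rintro p q ⟨hp, hq, hne, hevpq⟩
        refine ⟨hne, ?_⟩
        have h1 : ¬ s(p,q) = s(u,v) := by
          intro h; rcases Sym2.eq_iff.mp h with ⟨h1, -⟩ | ⟨-, h2⟩
          · exact hp h1
          · exact hq h2
        have h2 : ¬ s(p,q) = s(u,w) := by
          intro h; rcases Sym2.eq_iff.mp h with ⟨h1, -⟩ | ⟨-, h2⟩
          · exact hp h1
          · exact hq h2
        rw [hev' p q hne, if_neg h1, if_neg h2]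
        have g3 : (0:ℝ) ≤ if s(p,q) = s(v,w) then 1 else 0 := by positivity
        linarith
      have hARmono : ∀ p q : Fin n, (avoidG y u).Reachable p q →
          (supportGraph y').Reachable p q :=
        fun p q h => reach_mono (fun p' q' ha => (hint p' q' ha).reachable) h
      have hdegu' : 0 < ∑ e : Edge n, (if u ∈ e.val then y' e else 0) := by
        obtain ⟨k, hk0, hk⟩ := hdeg' u
        have hk1 : (1:ℝ) ≤ (k:ℝ) := by exact_mod_cast hk0
        unfold degree at hk
        rw [hk]; linarith
      obtain ⟨e1, -, he1⟩ := sum_pos_witness hdegu'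
      have hu1 : u ∈ e1.val := by by_contra h; rw [if_neg h] at he1; exact lt_irrefl 0 he1
      rw [if_pos hu1] at he1
      obtain ⟨q1, hq1u, he1v⟩ := edge_other hu1
      have huq1 : u ≠ q1 := hq1u.symm
      have hy1 : 0 < y e1 := by
        have hval1 := hval e1
        have h3 : e1.val = s(v,w) → False := fun h => u_not_mem_vw huv huw (h ▸ hu1)
        rw [if_neg h3] at hval1
        have g1 : (0:ℝ) ≤ if e1.val = s(u,v) then 1 else 0 := by positivity
        have g2 : (0:ℝ) ≤ if e1.val = s(u,w) then 1 else 0 := by positivity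
        linarith
      have hevyq1 : 0 < ev y u q1 := by rw [ev_eq y huq1, ← eq_EE huq1 he1v]; exact hy1
      have hadjuq1 : (supportGraph y').Adj u q1 :=
        ⟨huq1, by rw [ev_eq y' huq1, ← eq_EE huq1 he1v]; exact he1⟩
      have hfromu : ∀ p, (supportGraph y').Reachable u p := by
        intro p
        rcases eq_or_ne p u with rfl | hp
        · exact SimpleGraph.Reachable.refl _
        · exact hadjuq1.reachable.trans (hARmono q1 p
            ((hallv q1 hq1u hevyq1).symm.trans (hallreach p hp)))
      have hconn' : (supportGraph y').Connected := by
        haveI : Nonempty (Fin n) := hconn.nonempty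
        exact SimpleGraph.Connected.mk (fun p q => (hfromu p).symm.trans (hfromu q))
      exact ⟨y', ⟨hnat', hconn', hdeg'⟩, Or.inl ⟨v, w, hrt, hdot⟩⟩
    · -- u has a single neighbour v : remove two copies of uv
      push_neg at hsec
      have honly : ∀ q, q ≠ u → 0 < ev y u q → q = v := by
        intro q hqu hq
        by_contra hqv
        exact absurd hq (not_lt.mpr (hsec q hqu hqv))
      have hyuvdeg : y (EE huv) = 2 * m := by
        have hsingle : degree y u = y (EE huv) := by
          unfold degree
          rw [Finset.sum_eq_single (EE huv)]
          · rw [if_pos (show u ∈ (EE huv).val from Sym2.mem_mk_left u v)]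
          · intro e _ hne
            by_cases hue : u ∈ e.val
            · obtain ⟨q, hqu, heq⟩ := edge_other hue
              have hqv : q ≠ v := fun h => hne (eq_EE huv (by rw [heq, h]))
              have hnpos : ¬ 0 < y e := by
                intro hpos
                have : 0 < ev y u q := by
                  rw [ev_eq y hqu.symm, ← eq_EE hqu.symm heq]; exact hpos
                exact hqv (honly q hqu this)
              rw [if_pos hue]
              exact le_antisymm (not_lt.mp hnpos) (natval_nonneg hnat e)
            · rw [if_neg hue]
          · intro h; exact absurd (Finset.mem_univ _) h
        rw [← hsingle, hdegu]
      set y' : Edge n → ℝ := y - (2:ℝ) • indic u v with hy'def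
      have hval : ∀ e : Edge n, y' e = y e - 2 * (if e.val = s(u,v) then 1 else 0) :=
        fun e => rfl
      have hcast : ((2 * m - 2 : ℕ) : ℝ) = 2 * (m:ℝ) - 2 := by
        rw [Nat.cast_sub (by omega : 2 ≤ 2 * m)]; push_cast; ring
      have hnat' : ∀ e, ∃ k : ℕ, y' e = k := by
        intro e
        by_cases h1 : e.val = s(u,v)
        · refine ⟨2 * m - 2, ?_⟩
          rw [hval e, if_pos h1, eq_EE huv h1, hyuvdeg, hcast]
          ring
        · obtain ⟨k, hk⟩ := hnat e
          exact ⟨k, by rw [hval e, if_neg h1, hk]; ring⟩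
      have hdegval : ∀ p, degree y' p = degree y p - 2 * (if p ∈ s(u,v) then 1 else 0) := by
        intro p
        rw [hy'def, degree_sub, degree_smul, degree_indic huv]
      have hdeg' : ∀ q, ∃ k : ℕ, 0 < k ∧ degree y' q = 2 * k := by
        intro q
        by_cases hq : q = u
        · refine ⟨m - 1, by omega, ?_⟩
          rw [hq, hdegval, hdegu, if_pos (Sym2.mem_mk_left u v),
            Nat.cast_sub (by omega : 1 ≤ m)]
          push_cast; ring
        · by_cases hqv : q = v
          · rw [hqv]
            obtain ⟨k, hk0, hk⟩ := hdegall v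
            have hbig : y (EE huv) ≤ degree y v := by
              have h0 : ∀ e : Edge n, e ∈ Finset.univ →
                  0 ≤ (if v ∈ e.val then y e else 0) := by
                intro e _
                by_cases h : v ∈ e.val
                · rw [if_pos h]; exact natval_nonneg hnat e
                · rw [if_neg h]
              have hsl := Finset.single_le_sum h0 (Finset.mem_univ (EE huv))
              rw [if_pos (show v ∈ (EE huv).val from Sym2.mem_mk_right u v)] at hsl
              exact hsl
            have hkm : m ≤ k := by
              rw [hyuvdeg, hk] at hbig
              exact_mod_cast (by linarith : (m:ℝ) ≤ (k:ℝ))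
            refine ⟨k - 1, by omega, ?_⟩
            rw [hdegval, hk, if_pos (Sym2.mem_mk_right u v),
              Nat.cast_sub (by omega : 1 ≤ k)]
            push_cast; ring
          · obtain ⟨k, hk0, hk⟩ := hdegall q
            refine ⟨k, hk0, ?_⟩
            rw [hdegval, hk, if_neg ?_]
            · ring
            · rw [Sym2.mem_iff]
              rintro (rfl | rfl)
              · exact hq rfl
              · exact hqv rfl
      have hadj' : ∀ p q : Fin n, (supportGraph y).Adj p q → (supportGraph y').Adj p q := by
        rintro p q ⟨hne, hevpq⟩
        refine ⟨hne, ?_⟩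
        have hev'pq : ev y' p q = ev y p q - 2 * (if s(p,q) = s(u,v) then 1 else 0) := by
          rw [ev_eq y' hne, ev_eq y hne, hval]; rfl
        by_cases h1 : s(p,q) = s(u,v)
        · have hval2m : ev y p q = 2 * m := by
            rcases Sym2.eq_iff.mp h1 with ⟨rfl, rfl⟩ | ⟨rfl, rfl⟩
            · rw [ev_eq y huv]; exact hyuvdeg
            · rw [ev_symm, ev_eq y huv]; exact hyuvdeg
          rw [hev'pq, if_pos h1, hval2m]
          have h2m : (2:ℝ) ≤ (m:ℝ) := by exact_mod_cast hm
          linarith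
        · rw [hev'pq, if_neg h1]; linarith
      have hconn' := connected_mono hconn (fun p q h => (hadj' p q h).reachable)
      have hdot : ∀ a, dot a y' = dot a y - 2 * ev a u v := by
        intro a
        rw [hy'def, dot_sub, dot_smul, dot_indic a huv]
      exact ⟨y', ⟨hnat', hconn', hdeg'⟩, Or.inr ⟨v, huv, hdot⟩⟩
  · -- two-class case
    push_neg at hallv
    obtain ⟨w, hwu, hevuw, hnr⟩ := hallv
    have hwv : w ≠ v := by
      intro h
      subst h
      exact hnr (SimpleGraph.Reachable.refl _)
    have huw : u ≠ w := hwu.symm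
    have hrt : RootedTri u v w := ⟨hwv.symm, huv, huw⟩
    obtain ⟨y', hval, hnat', hdeg', hdot, hev'⟩ :=
      cross_patch hnat hdegall hrt hm hdegu hevuv hevuw
    have hint : ∀ p q : Fin n, (avoidG y u).Adj p q → (supportGraph y').Adj p q := by
      rintro p q ⟨hp, hq, hne, hevpq⟩
      refine ⟨hne, ?_⟩
      have h1 : ¬ s(p,q) = s(u,v) := by
        intro h; rcases Sym2.eq_iff.mp h with ⟨h1, -⟩ | ⟨-, h2⟩
        · exact hp h1
        · exact hq h2
      have h2 : ¬ s(p,q) = s(u,w) := by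
        intro h; rcases Sym2.eq_iff.mp h with ⟨h1, -⟩ | ⟨-, h2⟩
        · exact hp h1
        · exact hq h2
      rw [hev' p q hne, if_neg h1, if_neg h2]
      have g3 : (0:ℝ) ≤ if s(p,q) = s(v,w) then 1 else 0 := by positivity
      linarith
    have hARmono : ∀ p q : Fin n, (avoidG y u).Reachable p q →
        (supportGraph y').Reachable p q :=
      fun p q h => reach_mono (fun p' q' ha => (hint p' q' ha).reachable) h
    have hfromu : ∀ p, (supportGraph y').Reachable u p := by
      intro p
      rcases eq_or_ne p u with rfl | hp
      · exact SimpleGraph.Reachable.refl _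
      have hmemC : ∀ q, q ∈ Finset.univ.filter (fun q => (avoidG y u).Reachable p q) ↔
          (avoidG y u).Reachable p q := by
        intro q; rw [Finset.mem_filter]; simp
      set C : Finset (Fin n) := Finset.univ.filter
          (fun q => (avoidG y u).Reachable p q) with hCdef
      have huC : u ∉ C := by
        rw [hmemC]; intro h; exact (avoid_ne h hp) rfl
      have hcl : ∀ e : Edge n, 0 < y e → ∀ p' ∈ C, p' ∈ e.val → ∀ q, q ∈ e.val →
          q = u ∨ q ∈ C := by
        intro e hye p' hp'C hp'e q hqe
        by_cases hqu : q = u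
        · exact Or.inl hqu
        · refine Or.inr ((hmemC q).mpr ?_)
          rcases eq_or_ne p' q with rfl | hne
          · exact (hmemC p').mp hp'C
          · have he : e.val = s(p', q) := (Sym2.mem_and_mem_iff hne).mp ⟨hp'e, hqe⟩
            have hadjpq : (supportGraph y).Adj p' q :=
              ⟨hne, by rw [ev_eq y hne, ← eq_EE hne he]; exact hye⟩
            have hp'u : p' ≠ u := avoid_ne ((hmemC p').mp hp'C) hp
            exact ((hmemC p').mp hp'C).trans
              (SimpleGraph.Adj.reachable ⟨hp'u, hqu, hadjpq⟩)
      obtain ⟨N, hN⟩ := parity hnat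
        (fun q => ⟨(hdegall q).choose, (hdegall q).choose_spec.2⟩) u C huC hcl
      obtain ⟨q0, hq0u, hARpq0, hAdjq0u⟩ := first_hit hp (hconn.preconnected p u)
      have hq0C : q0 ∈ C := (hmemC q0).mpr hARpq0
      have hE0B : EE hq0u ∈ Finset.univ.filter
          (fun e : Edge n => u ∈ e.val ∧ ∃ q ∈ C, q ∈ e.val) :=
        Finset.mem_filter.mpr ⟨Finset.mem_univ _, Sym2.mem_mk_right q0 u,
          q0, hq0C, Sym2.mem_mk_left q0 u⟩
      have hyq0 : 1 ≤ y (EE hq0u) :=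
        natval_one_le hnat (by rw [← ev_eq y hq0u]; exact hAdjq0u.2)
      have hsum1 : 1 ≤ ∑ e ∈ Finset.univ.filter
          (fun e : Edge n => u ∈ e.val ∧ ∃ q ∈ C, q ∈ e.val), y e :=
        hyq0.trans (Finset.single_le_sum (fun e _ => natval_nonneg hnat e) hE0B)
      have hsum2 : 2 ≤ ∑ e ∈ Finset.univ.filter
          (fun e : Edge n => u ∈ e.val ∧ ∃ q ∈ C, q ∈ e.val), y e := by
        rw [hN] at hsum1 ⊢
        have hN1 : 1 ≤ N := by
          by_contra hc
          have hN0 : N = 0 := by omega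
          rw [hN0] at hsum1; norm_num at hsum1
        have : (1:ℝ) ≤ (N:ℝ) := by exact_mod_cast hN1
        linarith
      have hFv : EE huv ∈ Finset.univ.filter
          (fun e : Edge n => u ∈ e.val ∧ ∃ q ∈ C, q ∈ e.val) → v ∈ C := by
        intro h
        obtain ⟨-, -, q, hqC, hqe⟩ := Finset.mem_filter.mp h
        rw [EE_val, Sym2.mem_iff] at hqe
        rcases hqe with rfl | rfl
        · exact absurd hqC huC
        · exact hqC
      have hFw : EE huw ∈ Finset.univ.filter
          (fun e : Edge n => u ∈ e.val ∧ ∃ q ∈ C, q ∈ e.val) → w ∈ C := by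
        intro h
        obtain ⟨-, -, q, hqC, hqe⟩ := Finset.mem_filter.mp h
        rw [EE_val, Sym2.mem_iff] at hqe
        rcases hqe with rfl | rfl
        · exact absurd hqC huC
        · exact hqC
      have honeC : ¬ (v ∈ C ∧ w ∈ C) := by
        rintro ⟨hvC, hwC⟩
        exact hnr (((hmemC v).mp hvC).symm.trans ((hmemC w).mp hwC))
      have hI : (∑ e ∈ Finset.univ.filter
            (fun e : Edge n => u ∈ e.val ∧ ∃ q ∈ C, q ∈ e.val),
            if e = EE huv then (1:ℝ) else 0)
          + (∑ e ∈ Finset.univ.filter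
            (fun e : Edge n => u ∈ e.val ∧ ∃ q ∈ C, q ∈ e.val),
            if e = EE huw then (1:ℝ) else 0) ≤ 1 := by
        rw [Finset.sum_ite_eq', Finset.sum_ite_eq']
        by_cases h1 : EE huv ∈ Finset.univ.filter
            (fun e : Edge n => u ∈ e.val ∧ ∃ q ∈ C, q ∈ e.val)
        · by_cases h2 : EE huw ∈ Finset.univ.filter
              (fun e : Edge n => u ∈ e.val ∧ ∃ q ∈ C, q ∈ e.val)
          · exact absurd ⟨hFv h1, hFw h2⟩ honeC
          · simp [h1, h2]
        · by_cases h2 : EE huw ∈ Finset.univ.filter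
              (fun e : Edge n => u ∈ e.val ∧ ∃ q ∈ C, q ∈ e.val) <;> simp [h1, h2]
      have hle : ∀ e ∈ Finset.univ.filter
          (fun e : Edge n => u ∈ e.val ∧ ∃ q ∈ C, q ∈ e.val),
          y e - (if e = EE huv then (1:ℝ) else 0) - (if e = EE huw then (1:ℝ) else 0)
            ≤ y' e := by
        intro e _
        rw [hval e]
        have g3 : (0:ℝ) ≤ if e.val = s(v,w) then 1 else 0 := by positivity
        have g1 : (if e.val = s(u,v) then (1:ℝ) else 0) = if e = EE huv then (1:ℝ) else 0 := by
          by_cases h : e = EE huv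
          · subst h; simp [EE_val]
          · rw [if_neg h, if_neg (fun hv' => h (eq_EE huv hv'))]
        have g2 : (if e.val = s(u,w) then (1:ℝ) else 0) = if e = EE huw then (1:ℝ) else 0 := by
          by_cases h : e = EE huw
          · subst h; simp [EE_val]
          · rw [if_neg h, if_neg (fun hv' => h (eq_EE huw hv'))]
        rw [g1, g2]
        linarith
      have hsplit := Finset.sum_le_sum hle
      rw [Finset.sum_sub_distrib, Finset.sum_sub_distrib] at hsplit
      have hpos' : 0 < ∑ e ∈ Finset.univ.filter
          (fun e : Edge n => u ∈ e.val ∧ ∃ q ∈ C, q ∈ e.val), y' e := by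
        linarith
      obtain ⟨e1, he1B, he1⟩ := sum_pos_witness hpos'
      obtain ⟨-, hu1, q1, hq1C, hq1e⟩ := Finset.mem_filter.mp he1B
      have hq1u : q1 ≠ u := fun h => huC (h ▸ hq1C)
      have huq1 : u ≠ q1 := hq1u.symm
      have he1val : e1.val = s(u, q1) := (Sym2.mem_and_mem_iff huq1).mp ⟨hu1, hq1e⟩
      have hadjuq1 : (supportGraph y').Adj u q1 :=
        ⟨huq1, by rw [ev_eq y' huq1, ← eq_EE huq1 he1val]; exact he1⟩
      exact hadjuq1.reachable.trans (hARmono q1 p ((hmemC q1).mp hq1C).symm)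
    have hconn' : (supportGraph y').Connected := by
      haveI : Nonempty (Fin n) := hconn.nonempty
      exact SimpleGraph.Connected.mk (fun p q => (hfromu p).symm.trans (hfromu q))
    exact ⟨y', ⟨hnat', hconn', hdeg'⟩, Or.inl ⟨v, w, hrt, hdot⟩⟩


lemma dot_comm (a x : Edge n → ℝ) : dot a x = dot x a :=
  Finset.sum_congr rfl fun e _ => mul_comm _ _

lemma tri_delta {u v w : Fin n} (hrt : RootedTri u v w) : tri (delta u) u v w = 1 := by
  obtain ⟨hvw, huv, huw⟩ := hrt
  unfold tri
  rw [ev_eq _ (Ne.symm huv), ev_eq _ huw, ev_eq _ hvw]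
  show (if u ∈ s(v,u) then (1:ℝ)/2 else 0) + (if u ∈ s(u,w) then (1:ℝ)/2 else 0)
    - (if u ∈ s(v,w) then (1:ℝ)/2 else 0) = 1
  rw [if_pos (Sym2.mem_mk_right v u), if_pos (Sym2.mem_mk_left u w),
    if_neg (u_not_mem_vw huv huw)]
  norm_num

lemma delta_ge_one {y : Edge n → ℝ} (hy : IsEulerian y) (u : Fin n) :
    1 ≤ dot (delta u) y := by
  obtain ⟨m, hm0, hm⟩ := hy.2.2 u
  rw [dot_delta_eq, hm]
  have : (1:ℝ) ≤ m := by exact_mod_cast hm0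
  linarith

lemma exists_third (hn : 3 ≤ n) (u v : Fin n) : ∃ w : Fin n, w ≠ u ∧ w ≠ v := by
  by_contra hc
  push_neg at hc
  have hsub : (Finset.univ : Finset (Fin n)) ⊆ {u, v} := by
    intro w _
    rcases eq_or_ne w u with rfl | hwu
    · simp
    · simp [hc w hwu]
  have h1 := Finset.card_le_card hsub
  rw [Finset.card_univ, Fintype.card_fin] at h1
  have h2 : ({u, v} : Finset (Fin n)).card ≤ 2 :=
    (Finset.card_insert_le _ _).trans (by simp)
  omega

theorem stmt2' (hn : 5 ≤ n) (a : Edge n → ℝ) (α : ℝ)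
    (hvalid : ∀ x ∈ gtsp n, α ≤ dot a x)
    (hne : ({x ∈ gtsp n | dot a x = α}).Nonempty)
    (hgood : IsGood {x ∈ gtsp n | dot a x = α}) :
    IsTT a ↔ ∀ u : Fin n, ∃ x ∈ gtsp n, dot a x = α ∧ 1 < dot (delta u) x := by
  have hEul : ∀ s ∈ {x : Edge n → ℝ | IsEulerian x}, α ≤ dot a s :=
    fun s hs => hvalid s (subset_convexHull ℝ _ hs)
  constructor
  · rintro ⟨hmet, htt⟩ u
    obtain ⟨v, w, hrt, htri⟩ := htt u
    obtain ⟨x, hxF, hxe⟩ := hgood (EE hrt.1)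
    obtain ⟨hxP, hxa⟩ := hxF
    have hxc : (0:ℝ) < dot (indic v w) x := by
      rw [dot_comm, dot_indic x hrt.1, ev_eq x hrt.1]
      exact hxe
    obtain ⟨y, hyE, hya, hyc⟩ := extract hxP hEul hxa hxc
    have hypos : 0 < y (EE hrt.1) := by
      rw [dot_comm, dot_indic y hrt.1, ev_eq y hrt.1] at hyc
      exact hyc
    obtain ⟨y', hy'E, hdot⟩ := detour hyE hrt hypos
    refine ⟨y', eulerian_mem_gtsp hy'E, ?_, ?_⟩
    · rw [hdot a, hya, htri, add_zero]
    · rw [hdot (delta u), tri_delta hrt]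
      have := delta_ge_one hyE u
      linarith
  · intro h
    have hmet : IsMetric a := by
      intro u v w hrt
      by_contra hneg
      push_neg at hneg
      obtain ⟨x, hxF, hxe⟩ := hgood (EE hrt.1)
      obtain ⟨hxP, hxa⟩ := hxF
      have hxc : (0:ℝ) < dot (indic v w) x := by
        rw [dot_comm, dot_indic x hrt.1, ev_eq x hrt.1]
        exact hxe
      obtain ⟨y, hyE, hya, hyc⟩ := extract hxP hEul hxa hxc
      have hypos : 0 < y (EE hrt.1) := by
        rw [dot_comm, dot_indic y hrt.1, ev_eq y hrt.1] at hyc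
        exact hyc
      obtain ⟨y', hy'E, hdot⟩ := detour hyE hrt hypos
      have hv := hvalid y' (eulerian_mem_gtsp hy'E)
      rw [hdot a, hya] at hv
      linarith
    refine ⟨hmet, fun u => ?_⟩
    obtain ⟨x, hxP, hxa, hxd⟩ := h u
    obtain ⟨y, hyE, hya, hyd⟩ := extract hxP hEul hxa hxd
    obtain ⟨m, hm0, hm⟩ := hyE.2.2 u
    have hm2 : 2 ≤ m := by
      rw [dot_delta_eq, hm] at hyd
      have : (1:ℝ) < m := by linarith
      have : 1 < m := by exact_mod_cast this
      omega
    obtain ⟨y', hy'E, hcase⟩ := shortcut_step hyE u hm2 hm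
    have hvy' := hvalid y' (eulerian_mem_gtsp hy'E)
    rcases hcase with ⟨v, w, hrt, hdot⟩ | ⟨v, huv, hdot⟩
    · refine ⟨v, w, hrt, le_antisymm ?_ (hmet u v w hrt)⟩
      rw [hdot a, hya] at hvy'
      linarith
    · have hauv : ev a u v ≤ 0 := by
        rw [hdot a, hya] at hvy'
        linarith
      obtain ⟨w, hwu, hwv⟩ := exists_third (by omega : 3 ≤ n) u v
      have hrt : RootedTri u v w := ⟨hwv.symm, huv, hwu.symm⟩
      have hrt2 : RootedTri v u w := ⟨hwu.symm, Ne.symm huv, hwv.symm⟩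
      refine ⟨v, w, hrt, le_antisymm ?_ (hmet u v w hrt)⟩
      have hmet2 := hmet v u w hrt2
      unfold tri at hmet2 ⊢
      rw [ev_symm a v u]
      have hsym := ev_symm a v u
      linarith [hsym]
    

end AuxStmt2

/-- an inequality defining a nonempty good face `F` of `P` is TT
iff `F` is contained in no degree facet. -/
theorem stmt2 (n : ℕ) (hn : 5 ≤ n) (a : Edge n → ℝ) (α : ℝ)
    (hvalid : ∀ x ∈ gtsp n, α ≤ dot a x)
    (hne : ({x ∈ gtsp n | dot a x = α}).Nonempty)
    (hgood : IsGood {x ∈ gtsp n | dot a x = α}) :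
    IsTT a ↔ ∀ u : Fin n, ∃ x ∈ gtsp n, dot a x = α ∧ 1 < dot (delta u) x :=
  stmt2' hn a α hvalid hne hgood

end TSP
end

section
/- Suppose the inequality a·x ≥ 1 is valid for the graphical traveling salesman polyhedron P, the face G = {x ∈ P : a·x = 1} has affine dimension n(n−1)/2 − 1 (i.e., G is a facet of P), and G contains the symmetric traveling salesman polytope S. Then G is a degree facet: there exists u ∈ V with G = {x ∈ P : δ_u·x = 1}. -/
open scoped BigOperators

namespace TSP
variable {n : ℕ}
noncomputable section

def mkE (u v : Fin n) (h : u ≠ v) : Edge n :=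
  ⟨s(u, v), fun hd => h (Sym2.mk_isDiag_iff.mp hd)⟩

lemma ev_ne (a : Edge n → ℝ) {u v : Fin n} (h : u ≠ v) : ev a u v = a (mkE u v h) :=
  dif_neg h

lemma edge_eq (e : Edge n) : ∃ u v, ∃ h : u ≠ v, e = mkE u v h := by
  obtain ⟨z, hz⟩ := e
  induction z using Sym2.ind with
  | _ u v =>
    refine ⟨u, v, fun h => hz (by simp [h]), Subtype.ext rfl⟩

lemma mem_mkE_left (u v : Fin n) (h : u ≠ v) : u ∈ (mkE u v h).val := by
  simp [mkE]

lemma mem_mkE_right (u v : Fin n) (h : u ≠ v) : v ∈ (mkE u v h).val := by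
  simp [mkE]

lemma edge_unique (e : Edge n) {u v : Fin n} (h : u ≠ v)
    (hu : u ∈ e.val) (hv : v ∈ e.val) : e = mkE u v h := by
  obtain ⟨p, q, hpq, rfl⟩ := edge_eq e
  apply Subtype.ext
  show s(p,q) = s(u,v)
  simp only [mkE, Sym2.mem_iff] at hu hv
  rcases hu with rfl | rfl
  · rcases hv with rfl | rfl
    · exact absurd rfl h
    · rfl
  · rcases hv with rfl | rfl
    · exact Sym2.eq_swap
    · exact absurd rfl h

lemma sum_incident (F : Edge n → ℝ) (u : Fin n) (hF : ∀ e, u ∉ e.val → F e = 0) :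
    ∑ e, F e = ∑ v ∈ Finset.univ.erase u, ev F u v := by
  classical
  rw [← Finset.sum_filter_of_ne (p := fun e : Edge n => u ∈ e.val)
      (fun e _ hne => by by_contra hm; exact hne (hF e hm))]
  refine (Finset.sum_bij (fun (v : Fin n) (hv : v ∈ Finset.univ.erase u) =>
    mkE u v (Ne.symm (Finset.mem_erase.mp hv).1)) ?_ ?_ ?_ ?_).symm
  · intro v hv
    simp only [Finset.mem_filter, Finset.mem_univ, true_and]
    exact mem_mkE_left _ _ _
  · intro v hv w hw hvw
    have : s(u, v) = s(u, w) := congrArg Subtype.val hvw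
    exact Sym2.congr_right.mp this
  · intro e he
    simp only [Finset.mem_filter, Finset.mem_univ, true_and] at he
    have hs : s(u, Sym2.Mem.other' he) = e.val := Sym2.other_spec' he
    have hne : u ≠ Sym2.Mem.other' he := by
      intro h
      exact e.prop (by rw [← hs, ← h]; simp)
    exact ⟨Sym2.Mem.other' he, Finset.mem_erase.mpr ⟨Ne.symm hne, Finset.mem_univ _⟩,
      Subtype.ext hs⟩
  · intro v hv
    exact ev_ne F (Ne.symm (Finset.mem_erase.mp hv).1)


lemma nextF_val (i : Fin n) :
    (nextF i).val = if i.val + 1 = n then 0 else i.val + 1 := by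
  show (i.val + 1) % n = _
  split
  · next h => rw [h, Nat.mod_self]
  · next h => exact Nat.mod_eq_of_lt (by omega)

lemma nextF_ne (hn : 3 ≤ n) (i : Fin n) : nextF i ≠ i := by
  intro h
  have := congrArg Fin.val h
  rw [nextF_val] at this
  have hi := i.isLt
  split at this <;> omega

lemma nextF_inj (i j : Fin n) (h : nextF i = nextF j) : i = j := by
  have := congrArg Fin.val h
  rw [nextF_val, nextF_val] at this
  have hi := i.isLt; have hj := j.isLt
  apply Fin.ext
  split at this <;> split at this <;> omega

lemma nextF_nextF_ne (hn : 3 ≤ n) (i : Fin n) : nextF (nextF i) ≠ i := by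
  intro h
  have := congrArg Fin.val h
  rw [nextF_val, nextF_val] at this
  have hi := i.isLt
  split at this <;> split at this <;> omega

lemma sigma_next_ne (hn : 3 ≤ n) (σ : Equiv.Perm (Fin n)) (i : Fin n) :
    σ i ≠ σ (nextF i) :=
  fun h => nextF_ne hn i (σ.injective h.symm)

lemma dot_hamVec (hn : 3 ≤ n) (a : Edge n → ℝ) (σ : Equiv.Perm (Fin n)) :
    dot a (hamVec σ) = ∑ i : Fin n, ev a (σ i) (σ (nextF i)) := by
  classical
  have key : dot a (hamVec σ)
      = ∑ e ∈ Finset.univ.filter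
          (fun e : Edge n => ∃ i : Fin n, e.val = s(σ i, σ (nextF i))), a e := by
    rw [Finset.sum_filter]
    unfold dot hamVec
    exact Finset.sum_congr rfl (fun e _ => by split <;> simp)
  rw [key]
  refine (Finset.sum_bij
    (fun (i : Fin n) (_ : i ∈ Finset.univ) => mkE (σ i) (σ (nextF i)) (sigma_next_ne hn σ i))
    ?_ ?_ ?_ ?_).symm
  · intro i _
    exact Finset.mem_filter.mpr ⟨Finset.mem_univ _, ⟨i, rfl⟩⟩
  · intro i _ j _ hij
    have h : s(σ i, σ (nextF i)) = s(σ j, σ (nextF j)) := congrArg Subtype.val hij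
    rw [Sym2.eq_iff] at h
    rcases h with ⟨h1, _⟩ | ⟨h1, h2⟩
    · exact σ.injective h1
    · have hji : nextF i = j := σ.injective h2
      have hij' : i = nextF j := σ.injective h1
      exfalso
      exact nextF_nextF_ne hn j (by rw [← hij']; exact hji)
  · intro e he
    obtain ⟨i, hi⟩ := (Finset.mem_filter.mp he).2
    exact ⟨i, Finset.mem_univ _, (Subtype.ext hi.symm : _ = e)⟩
  · intro i _
    exact ev_ne a (sigma_next_ne hn σ i)

lemma exists_perm4 (hn : 5 ≤ n) (u v w x : Fin n)
    (huv : u ≠ v) (huw : u ≠ w) (hux : u ≠ x) (hvw : v ≠ w) (hvx : v ≠ x) (hwx : w ≠ x) :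
    ∃ g : Equiv.Perm (Fin n),
      g ⟨0, by omega⟩ = u ∧ g ⟨1, by omega⟩ = v ∧ g ⟨2, by omega⟩ = w ∧ g ⟨3, by omega⟩ = x := by
  classical
  set i0 : Fin n := ⟨0, by omega⟩
  set i1 : Fin n := ⟨1, by omega⟩
  set i2 : Fin n := ⟨2, by omega⟩
  set i3 : Fin n := ⟨3, by omega⟩
  have h01 : i0 ≠ i1 := by simp [i0, i1, Fin.ext_iff]
  have h02 : i0 ≠ i2 := by simp [i0, i2, Fin.ext_iff]
  have h03 : i0 ≠ i3 := by simp [i0, i3, Fin.ext_iff]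
  have h12 : i1 ≠ i2 := by simp [i1, i2, Fin.ext_iff]
  have h13 : i1 ≠ i3 := by simp [i1, i3, Fin.ext_iff]
  have h23 : i2 ≠ i3 := by simp [i2, i3, Fin.ext_iff]
  set g1 : Equiv.Perm (Fin n) := Equiv.swap i0 u with hg1
  have hg1u : g1 i0 = u := Equiv.swap_apply_left _ _
  set g2 : Equiv.Perm (Fin n) := (Equiv.swap i1 (g1.symm v)).trans g1 with hg2
  have hg2v : g2 i1 = v := by simp [hg2]
  have hg2u : g2 i0 = u := by
    have hb : g1.symm v ≠ i0 := by intro h; exact huv ((by rw [← hg1u, ← h, Equiv.apply_symm_apply] : _ = _)).symm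
    simp only [hg2, Equiv.trans_apply]
    rw [Equiv.swap_apply_of_ne_of_ne h01 (Ne.symm hb), hg1u]
  set g3 : Equiv.Perm (Fin n) := (Equiv.swap i2 (g2.symm w)).trans g2 with hg3
  have hb2 : g2.symm w ≠ i0 := by intro h; exact huw ((by rw [← hg2u, ← h, Equiv.apply_symm_apply] : _ = _)).symm
  have hb2' : g2.symm w ≠ i1 := by intro h; exact hvw ((by rw [← hg2v, ← h, Equiv.apply_symm_apply] : _ = _)).symm
  have hg3w : g3 i2 = w := by simp [hg3]
  have hg3u : g3 i0 = u := by
    simp only [hg3, Equiv.trans_apply]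
    rw [Equiv.swap_apply_of_ne_of_ne h02 (Ne.symm hb2), hg2u]
  have hg3v : g3 i1 = v := by
    simp only [hg3, Equiv.trans_apply]
    rw [Equiv.swap_apply_of_ne_of_ne h12 (Ne.symm hb2'), hg2v]
  set g4 : Equiv.Perm (Fin n) := (Equiv.swap i3 (g3.symm x)).trans g3 with hg4
  have hb3 : g3.symm x ≠ i0 := by intro h; exact hux ((by rw [← hg3u, ← h, Equiv.apply_symm_apply] : _ = _)).symm
  have hb3' : g3.symm x ≠ i1 := by intro h; exact hvx ((by rw [← hg3v, ← h, Equiv.apply_symm_apply] : _ = _)).symm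
  have hb3'' : g3.symm x ≠ i2 := by intro h; exact hwx ((by rw [← hg3w, ← h, Equiv.apply_symm_apply] : _ = _)).symm
  refine ⟨g4, ?_, ?_, ?_, by simp [hg4]⟩
  · simp only [hg4, Equiv.trans_apply]
    rw [Equiv.swap_apply_of_ne_of_ne h03 (Ne.symm hb3), hg3u]
  · simp only [hg4, Equiv.trans_apply]
    rw [Equiv.swap_apply_of_ne_of_ne h13 (Ne.symm hb3'), hg3v]
  · simp only [hg4, Equiv.trans_apply]
    rw [Equiv.swap_apply_of_ne_of_ne h23 (Ne.symm hb3''), hg3w]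

lemma nextF_eq_of_val (i : Fin n) (k : ℕ) (hk : k + 1 < n) (h : i.val = k) :
    nextF i = ⟨k + 1, hk⟩ := by
  apply Fin.ext
  show (nextF i).val = k + 1
  rw [nextF_val, h]
  split <;> omega

lemma val_of_nextF_eq (i : Fin n) (k : ℕ) (hk : 0 < k) (h : (nextF i).val = k) :
    i.val = k - 1 := by
  rw [nextF_val] at h
  have := i.isLt
  split at h <;> omega

lemma two_opt (hn : 5 ≤ n) (a : Edge n → ℝ)
    (hcyc : ∀ σ : Equiv.Perm (Fin n), dot a (hamVec σ) = 1)
    (u v w x : Fin n)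
    (huv : u ≠ v) (huw : u ≠ w) (hux : u ≠ x) (hvw : v ≠ w) (hvx : v ≠ x) (hwx : w ≠ x) :
    ev a u v + ev a w x = ev a u w + ev a v x := by
  classical
  obtain ⟨g, hg0, hg1, hg2, hg3⟩ := exists_perm4 hn u v w x huv huw hux hvw hvx hwx
  obtain ⟨i0, hv0⟩ : ∃ i : Fin n, i.val = 0 := ⟨⟨0, by omega⟩, rfl⟩
  obtain ⟨i1, hv1⟩ : ∃ i : Fin n, i.val = 1 := ⟨⟨1, by omega⟩, rfl⟩
  obtain ⟨i2, hv2⟩ : ∃ i : Fin n, i.val = 2 := ⟨⟨2, by omega⟩, rfl⟩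
  obtain ⟨i3, hv3⟩ : ∃ i : Fin n, i.val = 3 := ⟨⟨3, by omega⟩, rfl⟩
  have hg0' : g i0 = u := by
    rw [show i0 = ⟨0, by omega⟩ from Fin.ext hv0]; exact hg0
  have hg1' : g i1 = v := by
    rw [show i1 = ⟨1, by omega⟩ from Fin.ext hv1]; exact hg1
  have hg2' : g i2 = w := by
    rw [show i2 = ⟨2, by omega⟩ from Fin.ext hv2]; exact hg2
  have hg3' : g i3 = x := by
    rw [show i3 = ⟨3, by omega⟩ from Fin.ext hv3]; exact hg3
  obtain ⟨π, hπapp⟩ : ∃ π : Equiv.Perm (Fin n), ∀ i, π i = Equiv.swap i1 i2 i :=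
    ⟨Equiv.swap i1 i2, fun _ => rfl⟩
  obtain ⟨τ, hτapp⟩ : ∃ τ : Equiv.Perm (Fin n), ∀ i, τ i = g (π i) :=
    ⟨π.trans g, fun _ => rfl⟩
  have h01 : i0 ≠ i1 := fun h => by rw [h] at hv0; omega
  have h02 : i0 ≠ i2 := fun h => by rw [h] at hv0; omega
  have h12 : i1 ≠ i2 := fun h => by rw [h] at hv1; omega
  have h31 : i3 ≠ i1 := fun h => by rw [h] at hv3; omega
  have h32 : i3 ≠ i2 := fun h => by rw [h] at hv3; omega
  have hn0 : nextF i0 = i1 := Fin.ext (by rw [nextF_val, hv0, hv1]; split <;> omega)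
  have hn1 : nextF i1 = i2 := Fin.ext (by rw [nextF_val, hv1, hv2]; split <;> omega)
  have hn2 : nextF i2 = i3 := Fin.ext (by rw [nextF_val, hv2, hv3]; split <;> omega)
  have hπ0 : π i0 = i0 := by rw [hπapp]; exact Equiv.swap_apply_of_ne_of_ne h01 h02
  have hπ1 : π i1 = i2 := by rw [hπapp]; exact Equiv.swap_apply_left _ _
  have hπ2 : π i2 = i1 := by rw [hπapp]; exact Equiv.swap_apply_right _ _
  have hπ3 : π i3 = i3 := by rw [hπapp]; exact Equiv.swap_apply_of_ne_of_ne h31 h32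
  have key : ∑ i : Fin n, (ev a (g i) (g (nextF i)) - ev a (τ i) (τ (nextF i))) = 0 := by
    rw [Finset.sum_sub_distrib, ← dot_hamVec (by omega) a g, ← dot_hamVec (by omega) a τ,
      hcyc, hcyc]
    ring
  have hzero : ∀ i : Fin n, i ∉ ({i0, i1, i2} : Finset (Fin n)) →
      ev a (g i) (g (nextF i)) - ev a (τ i) (τ (nextF i)) = 0 := by
    intro i hi
    simp only [Finset.mem_insert, Finset.mem_singleton, not_or] at hi
    obtain ⟨hI0, hI1, hI2⟩ := hi
    have hπi : π i = i := by rw [hπapp]; exact Equiv.swap_apply_of_ne_of_ne hI1 hI2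
    have hπni : π (nextF i) = nextF i := by
      rw [hπapp]
      apply Equiv.swap_apply_of_ne_of_ne
      · intro h
        have h1 : (nextF i).val = 1 := by rw [h, hv1]
        have := val_of_nextF_eq i 1 (by omega) h1
        exact hI0 (Fin.ext (by rw [hv0]; simpa using this))
      · intro h
        have h1 : (nextF i).val = 2 := by rw [h, hv2]
        have := val_of_nextF_eq i 2 (by omega) h1
        exact hI1 (Fin.ext (by rw [hv1]; simpa using this))
    rw [hτapp, hτapp, hπi, hπni, sub_self]
  have hsub : ∑ i ∈ ({i0, i1, i2} : Finset (Fin n)),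
      (ev a (g i) (g (nextF i)) - ev a (τ i) (τ (nextF i))) = 0 := by
    rw [← key]
    exact Finset.sum_subset (Finset.subset_univ _) (fun i _ hi => hzero i hi)
  rw [Finset.sum_insert (by simp [h01, h02]), Finset.sum_insert (by simp [h12]),
    Finset.sum_singleton] at hsub
  simp only [hτapp, hn0, hn1, hn2, hπ0, hπ1, hπ2, hπ3, hg0', hg1', hg2', hg3'] at hsub
  have hsymm : ev a v w = ev a w v := ev_symm a v w
  linarith

lemma exists_lam (hn : 5 ≤ n) (a : Edge n → ℝ)
    (hcyc : ∀ σ : Equiv.Perm (Fin n), dot a (hamVec σ) = 1) :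
    ∃ l : Fin n → ℝ, ∀ u v : Fin n, u ≠ v → 2 * ev a u v = l u + l v := by
  classical
  set d : Fin n → ℝ := fun p => ∑ q ∈ Finset.univ.erase p, ev a p q with hd
  set T2 : ℝ := ∑ p, d p with hT2
  have hc1 : ((n:ℝ) - 1) ≠ 0 := by
    have : (5:ℝ) ≤ (n:ℝ) := by exact_mod_cast hn
    linarith
  have hc2 : ((n:ℝ) - 2) ≠ 0 := by
    have : (5:ℝ) ≤ (n:ℝ) := by exact_mod_cast hn
    linarith
  have hcast2 : ((n - 2 : ℕ) : ℝ) = (n:ℝ) - 2 := by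
    rw [Nat.cast_sub (by omega)]; norm_num
  have hcast3 : ((n - 3 : ℕ) : ℝ) = (n:ℝ) - 3 := by
    rw [Nat.cast_sub (by omega)]; norm_num
  refine ⟨fun p => (2*((n:ℝ) - 1) * d p - T2) / (((n:ℝ) - 1) * ((n:ℝ) - 2)), ?_⟩
  intro u v huv
  set A : Finset (Fin n) := (Finset.univ.erase u).erase v with hA
  have hvmem : v ∈ Finset.univ.erase u := Finset.mem_erase.mpr ⟨Ne.symm huv, Finset.mem_univ _⟩
  have hAcard : A.card = n - 2 := by
    rw [hA, Finset.card_erase_of_mem hvmem, Finset.card_erase_of_mem (Finset.mem_univ u),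
      Finset.card_univ, Fintype.card_fin]
    omega
  have hAne : ∀ w ∈ A, w ≠ u ∧ w ≠ v := by
    intro w hw
    rw [hA, Finset.mem_erase, Finset.mem_erase] at hw
    exact ⟨hw.2.1, hw.1⟩
  have hAcardR : (A.card : ℝ) = (n:ℝ) - 2 := by rw [hAcard, hcast2]
  have hAecard : ∀ w ∈ A, ((A.erase w).card : ℝ) = (n:ℝ) - 3 := by
    intro w hw
    rw [Finset.card_erase_of_mem hw, hAcard]
    have : n - 2 - 1 = n - 3 := by omega
    rw [this, hcast3]
  -- the vanishing double sum
  have hzero : ∑ w ∈ A, ∑ x ∈ A.erase w,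
      (ev a u v + ev a w x - ev a u w - ev a v x) = 0 := by
    apply Finset.sum_eq_zero
    intro w hw
    apply Finset.sum_eq_zero
    intro x hx
    obtain ⟨hwu, hwv⟩ := hAne w hw
    have hxw : x ≠ w := (Finset.mem_erase.mp hx).1
    obtain ⟨hxu, hxv⟩ := hAne x (Finset.mem_erase.mp hx).2
    have := two_opt hn a hcyc u v w x huv (Ne.symm hwu) (Ne.symm hxu)
      (Ne.symm hwv) (Ne.symm hxv) (Ne.symm hxw)
    linarith
  -- piece 1
  have e1 : ∑ w ∈ A, ∑ x ∈ A.erase w, ev a u v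
      = ((n:ℝ)-2) * (((n:ℝ)-3) * ev a u v) := by
    rw [Finset.sum_congr rfl (fun w hw => by
      rw [Finset.sum_const, nsmul_eq_mul, hAecard w hw] :
        ∀ w ∈ A, ∑ _x ∈ A.erase w, ev a u v = ((n:ℝ)-3) * ev a u v)]
    rw [Finset.sum_const, nsmul_eq_mul, hAcardR]
  -- sums over A of incident values
  have hsumAu : ∑ w ∈ A, ev a u w = d u - ev a u v := by
    have := Finset.sum_erase_add (Finset.univ.erase u) (fun q => ev a u q) hvmem
    rw [hd]; simp only at this ⊢
    linarith [this]
  have hA' : A = (Finset.univ.erase v).erase u := by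
    ext q
    simp only [hA, Finset.mem_erase, Finset.mem_univ, and_true]
    tauto
  have humem : u ∈ Finset.univ.erase v := Finset.mem_erase.mpr ⟨huv, Finset.mem_univ _⟩
  have hsumAv : ∑ w ∈ A, ev a v w = d v - ev a u v := by
    have h2 := Finset.sum_erase_add (Finset.univ.erase v) (fun q => ev a v q) humem
    rw [hA']
    rw [hd]; simp only at h2 ⊢
    rw [ev_symm a v u] at h2
    linarith [h2]
  -- piece 2
  have e2 : ∑ w ∈ A, ∑ x ∈ A.erase w, ev a u w = ((n:ℝ)-3) * (d u - ev a u v) := by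
    rw [Finset.sum_congr rfl (fun w hw => by
      rw [Finset.sum_const, nsmul_eq_mul, hAecard w hw] :
        ∀ w ∈ A, ∑ _x ∈ A.erase w, ev a u w = ((n:ℝ)-3) * ev a u w)]
    rw [← Finset.mul_sum, hsumAu]
  -- piece 3
  have e3 : ∑ w ∈ A, ∑ x ∈ A.erase w, ev a v x = ((n:ℝ)-3) * (d v - ev a u v) := by
    have inner : ∀ w ∈ A, ∑ x ∈ A.erase w, ev a v x = (∑ x ∈ A, ev a v x) - ev a v w := by
      intro w hw
      have := Finset.sum_erase_add A (fun x => ev a v x) hw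
      linarith [this]
    rw [Finset.sum_congr rfl inner, Finset.sum_sub_distrib, Finset.sum_const,
      nsmul_eq_mul, hAcardR, hsumAv]
    ring
  -- piece 4
  have e4 : ∑ w ∈ A, ∑ x ∈ A.erase w, ev a w x
      = T2 - 2 * d u - 2 * d v + 2 * ev a u v := by
    have hTsplit : T2 = d u + d v + ∑ p ∈ A, d p := by
      have h1 := Finset.sum_erase_add Finset.univ d (Finset.mem_univ u)
      have h2 := Finset.sum_erase_add (Finset.univ.erase u) d hvmem
      rw [hT2, ← hA] at *
      linarith [h1, h2]
    have hdp : ∀ p ∈ A, d p = ev a p u + ev a p v + ∑ q ∈ A.erase p, ev a p q := by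
      intro p hp
      obtain ⟨hpu, hpv⟩ := hAne p hp
      have humem' : u ∈ (Finset.univ.erase p) := Finset.mem_erase.mpr ⟨Ne.symm hpu, Finset.mem_univ _⟩
      have hvmem' : v ∈ (Finset.univ.erase p).erase u :=
        Finset.mem_erase.mpr ⟨Ne.symm huv, Finset.mem_erase.mpr ⟨Ne.symm hpv, Finset.mem_univ _⟩⟩
      have h1 := Finset.sum_erase_add (Finset.univ.erase p) (fun q => ev a p q) humem'
      have h2 := Finset.sum_erase_add ((Finset.univ.erase p).erase u) (fun q => ev a p q) hvmem'
      have hset : ((Finset.univ.erase p).erase u).erase v = A.erase p := by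
        ext q
        simp only [hA, Finset.mem_erase, Finset.mem_univ, and_true]
        tauto
      rw [hset] at h2
      rw [hd]; simp only at h1 h2 ⊢
      linarith [h1, h2]
    have hsum : ∑ p ∈ A, d p
        = (d u - ev a u v) + (d v - ev a u v) + ∑ w ∈ A, ∑ x ∈ A.erase w, ev a w x := by
      rw [Finset.sum_congr rfl hdp, Finset.sum_add_distrib, Finset.sum_add_distrib]
      have hswap1 : ∑ p ∈ A, ev a p u = ∑ p ∈ A, ev a u p :=
        Finset.sum_congr rfl (fun p _ => ev_symm a p u)
      have hswap2 : ∑ p ∈ A, ev a p v = ∑ p ∈ A, ev a v p :=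
        Finset.sum_congr rfl (fun p _ => ev_symm a p v)
      rw [hswap1, hswap2, hsumAu, hsumAv]
    linarith [hTsplit, hsum]
  -- combine
  have hexp : ∑ w ∈ A, ∑ x ∈ A.erase w,
      (ev a u v + ev a w x - ev a u w - ev a v x)
      = ((n:ℝ)-2) * (((n:ℝ)-3) * ev a u v)
        + (T2 - 2 * d u - 2 * d v + 2 * ev a u v)
        - ((n:ℝ)-3) * (d u - ev a u v) - ((n:ℝ)-3) * (d v - ev a u v) := by
    simp only [Finset.sum_sub_distrib, Finset.sum_add_distrib]
    rw [e1, e2, e3, e4]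
  have hE : ((n:ℝ)-1) * (((n:ℝ)-2) * ev a u v) = ((n:ℝ)-1) * (d u + d v) - T2 := by
    have h := hexp ▸ hzero
    linear_combination h
  show 2 * ev a u v = _
  field_simp
  linear_combination 2 * hE

def starv (u : Fin n) : Edge n → ℝ := fun e => if u ∈ e.val then 2 else 0

lemma dot_starv (a : Edge n → ℝ) (u : Fin n) :
    dot a (starv u) = 2 * ∑ v ∈ Finset.univ.erase u, ev a u v := by
  classical
  unfold dot
  have h1 : ∀ e : Edge n, a e * starv u e
      = (fun e : Edge n => if u ∈ e.val then 2 * a e else 0) e := by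
    intro e
    by_cases h : u ∈ e.val <;> simp [starv, h] <;> ring
  rw [Finset.sum_congr rfl (fun e _ => h1 e),
    sum_incident _ u (fun e he => if_neg he), Finset.mul_sum]
  apply Finset.sum_congr rfl
  intro v hv
  have hne : u ≠ v := Ne.symm (Finset.mem_erase.mp hv).1
  rw [ev_ne _ hne, ev_ne a hne]
  simp [mem_mkE_left]

lemma starv_eulerian (hn : 5 ≤ n) (u : Fin n) : IsEulerian (starv u) := by
  classical
  have hadj : ∀ v : Fin n, v ≠ u → (supportGraph (starv u)).Adj u v := by
    intro v hv
    show u ≠ v ∧ 0 < ev (starv u) u v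
    refine ⟨Ne.symm hv, ?_⟩
    rw [ev_ne _ (Ne.symm hv)]
    simp [starv, mem_mkE_left]
  refine ⟨?_, ?_, ?_⟩
  · intro e
    by_cases h : u ∈ e.val
    · exact ⟨2, by simp [starv, h]⟩
    · exact ⟨0, by simp [starv, h]⟩
  · haveI : Nonempty (Fin n) := ⟨u⟩
    refine ⟨?_⟩
    intro p q
    rcases eq_or_ne p q with rfl | hpq
    · exact SimpleGraph.Reachable.refl p
    rcases eq_or_ne p u with rfl | hpu
    · exact (hadj q (Ne.symm hpq)).reachable
    rcases eq_or_ne q u with rfl | hqu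
    · exact ((hadj p hpu).symm).reachable
    · exact ((hadj p hpu).symm.reachable).trans (hadj q hqu).reachable
  · intro v
    rcases eq_or_ne v u with rfl | hvu
    · refine ⟨n - 1, by omega, ?_⟩
      unfold degree
      have h1 : ∀ e : Edge n, (if v ∈ e.val then starv v e else 0)
          = (fun e : Edge n => if v ∈ e.val then (2:ℝ) else 0) e := by
        intro e
        by_cases h : v ∈ e.val <;> simp [starv, h]
      rw [Finset.sum_congr rfl (fun e _ => h1 e),
        sum_incident _ v (fun e he => if_neg he)]
      have h2 : ∀ w ∈ Finset.univ.erase v,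
          ev (fun e : Edge n => if v ∈ e.val then (2:ℝ) else 0) v w = 2 := by
        intro w hw
        have hne : v ≠ w := Ne.symm (Finset.mem_erase.mp hw).1
        rw [ev_ne _ hne]
        simp [mem_mkE_left]
      rw [Finset.sum_congr rfl h2, Finset.sum_const, nsmul_eq_mul,
        Finset.card_erase_of_mem (Finset.mem_univ v), Finset.card_univ, Fintype.card_fin]
      ring
    · refine ⟨1, one_pos, ?_⟩
      unfold degree
      rw [Finset.sum_eq_single (mkE u v (Ne.symm hvu))]
      · rw [if_pos (mem_mkE_right u v (Ne.symm hvu))]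
        simp [starv, mem_mkE_left]
      · intro e _ hne
        by_cases hv : v ∈ e.val
        · by_cases hu : u ∈ e.val
          · exact absurd (edge_unique e (Ne.symm hvu) hu hv) hne
          · simp [starv, hv, hu]
        · simp [hv]
      · intro h; exact absurd (Finset.mem_univ _) h

lemma dot_add_right (b x y : Edge n → ℝ) : dot b (x + y) = dot b x + dot b y := by
  unfold dot
  rw [← Finset.sum_add_distrib]
  apply Finset.sum_congr rfl
  intro e _
  simp [Pi.add_apply]
  ring

lemma dot_smul_right (b : Edge n → ℝ) (c : ℝ) (x : Edge n → ℝ) :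
    dot b (c • x) = c * dot b x := by
  unfold dot
  rw [Finset.mul_sum]
  apply Finset.sum_congr rfl
  intro e _
  simp [Pi.smul_apply, smul_eq_mul]
  ring

lemma dot_delta_half_degree (w : Fin n) (x : Edge n → ℝ) :
    dot (delta w) x = degree x w / 2 := by
  unfold dot delta degree
  rw [Finset.sum_div]
  apply Finset.sum_congr rfl
  intro e _
  by_cases h : w ∈ e.val <;> simp [h] <;> ring

lemma gtsp_delta_ge (w : Fin n) : ∀ x ∈ gtsp n, 1 ≤ dot (delta w) x := by
  intro x hx
  have hconv : Convex ℝ {y : Edge n → ℝ | 1 ≤ dot (delta w) y} :=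
    convex_halfSpace_ge ⟨dot_add_right (delta w), dot_smul_right (delta w)⟩ 1
  have hsub : {y : Edge n → ℝ | IsEulerian y} ⊆ {y : Edge n → ℝ | 1 ≤ dot (delta w) y} := by
    intro y hy
    obtain ⟨_, _, hdeg⟩ := hy
    obtain ⟨m, hm, hdm⟩ := hdeg w
    show 1 ≤ dot (delta w) y
    rw [dot_delta_half_degree, hdm]
    have : (1:ℝ) ≤ (m:ℝ) := by exact_mod_cast hm
    linarith
  exact convexHull_min hsub hconv hx

lemma dot_delta_indic (p q r : Fin n) (hqr : q ≠ r) :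
    dot (delta p) (indic q r) = if p ∈ s(q, r) then 1/2 else 0 := by
  classical
  unfold dot
  rw [Finset.sum_eq_single (mkE q r hqr)]
  · have h1 : indic q r (mkE q r hqr) = 1 := by simp [indic, mkE]
    have h2 : delta p (mkE q r hqr) = if p ∈ s(q, r) then 1/2 else 0 := by
      simp [delta, mkE]
    rw [h1, h2, mul_one]
  · intro e _ hne
    have h0 : indic q r e = 0 := by
      simp only [indic]
      rw [if_neg]
      intro h
      exact hne (Subtype.ext h)
    rw [h0, mul_zero]
  · intro h; exact absurd (Finset.mem_univ _) h

lemma sum_delta_eval (l : Fin n → ℝ) (p q : Fin n) (hpq : p ≠ q) :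
    ∑ u, l u * delta u (mkE p q hpq) = (l p + l q) / 2 := by
  classical
  have h1 : ∀ u : Fin n, l u * delta u (mkE p q hpq)
      = (if u = p then l p / 2 else 0) + (if u = q then l q / 2 else 0) := by
    intro u
    have hmem : u ∈ (mkE p q hpq).val ↔ u = p ∨ u = q := by
      simp [mkE, Sym2.mem_iff]
    simp only [delta]
    rcases eq_or_ne u p with rfl | hup
    · rw [if_pos (hmem.mpr (Or.inl rfl)), if_pos rfl, if_neg hpq]
      ring
    rcases eq_or_ne u q with rfl | huq
    · rw [if_pos (hmem.mpr (Or.inr rfl)), if_neg hup, if_pos rfl]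
      ring
    · rw [if_neg (fun h => by rcases hmem.mp h with h | h; exact hup h; exact huq h),
        if_neg hup, if_neg huq]
      ring
  rw [Finset.sum_congr rfl (fun u _ => h1 u), Finset.sum_add_distrib,
    Finset.sum_ite_eq' Finset.univ p (fun _ => l p / 2),
    Finset.sum_ite_eq' Finset.univ q (fun _ => l q / 2)]
  simp
  ring

lemma dot_decomp (l : Fin n → ℝ) (a : Edge n → ℝ)
    (hpt : ∀ e, a e = ∑ u, l u * delta u e) (x : Edge n → ℝ) :
    dot a x = ∑ u, l u * dot (delta u) x := by
  unfold dot
  rw [Finset.sum_congr rfl (fun e (_ : e ∈ Finset.univ) => by rw [hpt e] :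
    ∀ e ∈ Finset.univ, a e * x e = (∑ u, l u * delta u e) * x e)]
  simp only [Finset.sum_mul]
  rw [Finset.sum_comm]
  apply Finset.sum_congr rfl
  intro u _
  rw [Finset.mul_sum]
  apply Finset.sum_congr rfl
  intro e _
  ring

lemma edge_card : Fintype.card (Edge n) = n * (n - 1) / 2 := by
  classical
  rw [Sym2.card_subtype_not_diag, Fintype.card_fin, Nat.choose_two_right]

lemma dim_bound (hn : 5 ≤ n) (u v : Fin n) (huv : u ≠ v)
    (G : Set (Edge n → ℝ))
    (hGsub : ∀ x ∈ G, dot (delta u) x = 1 ∧ dot (delta v) x = 1) :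
    adim G ≤ n * (n - 1) / 2 - 2 := by
  classical
  set L : (Edge n → ℝ) →ₗ[ℝ] ℝ × ℝ :=
    { toFun := fun x => (dot (delta u) x, dot (delta v) x)
      map_add' := fun x y => by
        simp only [dot_add_right, Prod.mk_add_mk]
      map_smul' := fun c x => by
        simp only [dot_smul_right, RingHom.id_apply, Prod.smul_mk, smul_eq_mul] } with hL
  have hker : vectorSpan ℝ G ≤ LinearMap.ker L := by
    rw [vectorSpan_def]
    apply Submodule.span_le.mpr
    rintro z hz
    rw [Set.mem_vsub] at hz
    obtain ⟨y, hy, x, hx, rfl⟩ := hz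
    obtain ⟨hyu, hyv⟩ := hGsub y hy
    obtain ⟨hxu, hxv⟩ := hGsub x hx
    have hsub : y -ᵥ x = y - x := rfl
    rw [SetLike.mem_coe, LinearMap.mem_ker, hsub]
    have h1 : dot (delta u) (y - x) = 0 := by
      have := dot_add_right (delta u) (y - x) x
      simp only [sub_add_cancel] at this
      rw [hyu] at this
      linarith [hxu ▸ this]
    have h2 : dot (delta v) (y - x) = 0 := by
      have := dot_add_right (delta v) (y - x) x
      simp only [sub_add_cancel] at this
      rw [hyv] at this
      linarith [hxv ▸ this]
    show (dot (delta u) (y - x), dot (delta v) (y - x)) = 0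
    rw [h1, h2]
    rfl
  -- surjectivity
  obtain ⟨w', hw'univ, hw'⟩ : ∃ w' ∈ Finset.univ, w' ∉ ({u, v} : Finset (Fin n)) := by
    apply Finset.exists_of_ssubset
    rw [Finset.ssubset_univ_iff]
    intro h
    have hc : ({u, v} : Finset (Fin n)).card = n := by rw [h, Finset.card_univ, Fintype.card_fin]
    have : ({u, v} : Finset (Fin n)).card ≤ 2 := Finset.card_insert_le _ _ |>.trans (by simp)
    omega
  simp only [Finset.mem_insert, Finset.mem_singleton, not_or] at hw'
  obtain ⟨hw'u, hw'v⟩ := hw'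
  have hsurj : Function.Surjective L := by
    rintro ⟨s, t⟩
    refine ⟨(2*s) • indic u w' + (2*t) • indic v w', ?_⟩
    have e1 : dot (delta u) (indic u w') = 1/2 := by
      rw [dot_delta_indic u u w' (Ne.symm hw'u)]
      rw [if_pos (Sym2.mem_iff.mpr (Or.inl rfl))]
    have e2 : dot (delta u) (indic v w') = 0 := by
      rw [dot_delta_indic u v w' (Ne.symm hw'v)]
      rw [if_neg]
      rw [Sym2.mem_iff]
      push_neg
      exact ⟨huv, Ne.symm hw'u⟩
    have e3 : dot (delta v) (indic u w') = 0 := by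
      rw [dot_delta_indic v u w' (Ne.symm hw'u)]
      rw [if_neg]
      rw [Sym2.mem_iff]
      push_neg
      exact ⟨Ne.symm huv, Ne.symm hw'v⟩
    have e4 : dot (delta v) (indic v w') = 1/2 := by
      rw [dot_delta_indic v v w' (Ne.symm hw'v)]
      rw [if_pos (Sym2.mem_iff.mpr (Or.inl rfl))]
    have : L ((2*s) • indic u w' + (2*t) • indic v w')
        = (2*s) • L (indic u w') + (2*t) • L (indic v w') := by
      rw [map_add, map_smul, map_smul]
    rw [this]
    show (2*s) • (dot (delta u) (indic u w'), dot (delta v) (indic u w'))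
        + (2*t) • (dot (delta u) (indic v w'), dot (delta v) (indic v w')) = (s, t)
    rw [e1, e2, e3, e4]
    simp [Prod.ext_iff]
    constructor <;> ring
  have hrange : LinearMap.range L = ⊤ := LinearMap.range_eq_top.mpr hsurj
  have hrk := LinearMap.finrank_range_add_finrank_ker L
  rw [hrange] at hrk
  have hrktop : Module.finrank ℝ (⊤ : Submodule ℝ (ℝ × ℝ)) = 2 := by
    rw [finrank_top]
    rw [Module.finrank_prod, Module.finrank_self]
  rw [hrktop, Module.finrank_fintype_fun_eq_card, edge_card] at hrk
  have hkerrk : Module.finrank ℝ (LinearMap.ker L) = n * (n - 1) / 2 - 2 := by omega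
  have hmono : Module.finrank ℝ (vectorSpan ℝ G) ≤ Module.finrank ℝ (LinearMap.ker L) :=
    Submodule.finrank_mono hker
  unfold adim
  rw [direction_affineSpan]
  omega

end

/-- a facet of `P` containing `S` is a degree facet. -/
theorem stmt6 (n : ℕ) (hn : 5 ≤ n) (a : Edge n → ℝ)
    (hvalid : ∀ x ∈ gtsp n, 1 ≤ dot a x)
    (hdim : adim {x ∈ gtsp n | dot a x = 1} = n * (n - 1) / 2 - 1)
    (hS : stsp n ⊆ {x ∈ gtsp n | dot a x = 1}) :
    ∃ u : Fin n, {x ∈ gtsp n | dot a x = 1} = {x ∈ gtsp n | dot (delta u) x = 1} := by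
  classical
  have hcyc : ∀ σ : Equiv.Perm (Fin n), dot a (hamVec σ) = 1 := by
    intro σ
    have hmem : hamVec σ ∈ stsp n :=
      subset_convexHull ℝ {x | ∃ σ' : Equiv.Perm (Fin n), x = hamVec σ'} ⟨σ, rfl⟩
    exact (hS hmem).2
  obtain ⟨l, hl⟩ := exists_lam hn a hcyc
  -- pointwise decomposition
  have hpt : ∀ e : Edge n, a e = ∑ w, l w * delta w e := by
    intro e
    obtain ⟨p, q, hpq, rfl⟩ := edge_eq e
    rw [sum_delta_eval l p q hpq]
    have h := hl p q hpq
    rw [ev_ne a hpq] at h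
    linarith
  -- sum of lambdas is 1
  have hsum1 : ∑ w, l w = 1 := by
    have h1 := hcyc 1
    rw [dot_hamVec (by omega) a 1] at h1
    have h2 : ∀ i : Fin n, ev a ((1 : Equiv.Perm (Fin n)) i) ((1 : Equiv.Perm (Fin n)) (nextF i))
        = (l i + l (nextF i)) / 2 := by
      intro i
      have hne : i ≠ nextF i := fun h => nextF_ne (by omega) i h.symm
      simp only [Equiv.Perm.coe_one, id_eq]
      have := hl i (nextF i) hne
      linarith
    rw [Finset.sum_congr rfl (fun i _ => h2 i)] at h1
    have hbij : ∑ i : Fin n, l (nextF i) = ∑ i, l i := by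
      apply Fintype.sum_bijective nextF
      · exact Finite.injective_iff_bijective.mp (fun i j h => nextF_inj i j h)
      · intro i; rfl
    rw [← Finset.sum_div, Finset.sum_add_distrib, hbij] at h1
    linarith
  -- nonnegativity
  have hnR : (5:ℝ) ≤ (n:ℝ) := by exact_mod_cast hn
  have hnn : ∀ w, 0 ≤ l w := by
    intro w
    have hmem : starv w ∈ gtsp n :=
      subset_convexHull ℝ {x : Edge n → ℝ | IsEulerian x} (starv_eulerian hn w)
    have h1 := hvalid _ hmem
    rw [dot_starv] at h1
    have h2 : ∀ v ∈ Finset.univ.erase w, ev a w v = (l w + l v) / 2 := by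
      intro v hv
      have hne : w ≠ v := Ne.symm (Finset.mem_erase.mp hv).1
      have := hl w v hne
      linarith
    rw [Finset.sum_congr rfl h2, ← Finset.sum_div, Finset.sum_add_distrib,
      Finset.sum_const, nsmul_eq_mul,
      Finset.card_erase_of_mem (Finset.mem_univ w), Finset.card_univ, Fintype.card_fin] at h1
    have h3 : ∑ v ∈ Finset.univ.erase w, l v = 1 - l w := by
      have := Finset.sum_erase_add Finset.univ l (Finset.mem_univ w)
      rw [hsum1] at this
      linarith
    rw [h3] at h1
    have hcast : ((n - 1 : ℕ) : ℝ) = (n:ℝ) - 1 := by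
      rw [Nat.cast_sub (by omega)]; norm_num
    rw [hcast] at h1
    nlinarith
  -- face inclusion into degree hyperplanes
  have hface : ∀ w, 0 < l w → ∀ x, x ∈ gtsp n → dot a x = 1 → dot (delta w) x = 1 := by
    intro w hw x hx hax
    have hdec : dot a x = ∑ p, l p * dot (delta p) x := dot_decomp l a hpt x
    have hzero : ∑ p, l p * (dot (delta p) x - 1) = 0 := by
      have hsplit : ∑ p, l p * (dot (delta p) x - 1)
          = (∑ p, l p * dot (delta p) x) - ∑ p, l p := by
        simp only [mul_sub, mul_one, Finset.sum_sub_distrib]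
      rw [hsplit, ← hdec, hax, hsum1]
      ring
    have hterm := (Finset.sum_eq_zero_iff_of_nonneg
      (fun p _ => mul_nonneg (hnn p) (by linarith [gtsp_delta_ge p x hx]))).mp
      hzero w (Finset.mem_univ w)
    rcases mul_eq_zero.mp hterm with h | h
    · exact absurd h (ne_of_gt hw)
    · linarith
  -- there is a positive lambda
  obtain ⟨u0, hu0⟩ : ∃ w, 0 < l w := by
    by_contra hcon
    push_neg at hcon
    have : ∑ w, l w ≤ 0 := Finset.sum_nonpos (fun w _ => hcon w)
    rw [hsum1] at this
    linarith
  -- uniqueness of the positive lambda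
  have h10 : 10 ≤ n * (n - 1) / 2 := by
    have h1 : 5 * 4 ≤ n * (n - 1) := Nat.mul_le_mul hn (by omega)
    omega
  have huniq : ∀ w, w ≠ u0 → l w = 0 := by
    intro w hw
    rcases (hnn w).lt_or_eq with hlt | heq
    · exfalso
      have hGsub : ∀ x ∈ {x ∈ gtsp n | dot a x = 1},
          dot (delta u0) x = 1 ∧ dot (delta w) x = 1 := by
        intro x hx
        exact ⟨hface u0 hu0 x hx.1 hx.2, hface w hlt x hx.1 hx.2⟩
      have hbd := dim_bound hn u0 w (Ne.symm hw) _ hGsub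
      rw [hdim] at hbd
      omega
    · exact heq.symm
  have hl1 : l u0 = 1 := by
    have : ∑ w, l w = l u0 :=
      Finset.sum_eq_single u0 (fun b _ hb => huniq b hb)
        (fun h => absurd (Finset.mem_univ u0) h)
    rw [hsum1] at this
    exact this.symm
  have haeq : a = delta u0 := by
    funext e
    rw [hpt e, Finset.sum_eq_single u0 (fun b _ hb => by rw [huniq b hb, zero_mul])
      (fun h => absurd (Finset.mem_univ u0) h), hl1, one_mul]
  exact ⟨u0, by rw [haeq]⟩

end TSP
end
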